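/- arXiv:0909.0969 — 5 statements merged into one kernel-verified Lean document; each statement's English description precedes it below -/
import Mathlib

section
/- Let k be a perfect field of characteristic p, let S̄ = k[[T₁,…,T_d]] with maximal ideal r̄ = (T₁,…,T_d), and let σ: S̄ → S̄ be the Frobenius-semilinear ring endomorphism with σ(Tᵢ) = Tᵢᵖ. Let h̄ ∈ r̄ have order e ≤ p−2 (i.e. h̄ ∈ r̄^e \ r̄^{e+1}). Let C be an S̄-module annihilated by some f ∈ S̄ \ {0}, and let φ: C → S̄ ⊗_{σ,S̄} C be an S̄-linear map whose cokernel is annihilated by h̄. Then C = 0. -/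
/-- `D`, together with the `σ`-semilinear map `ι : C → D`, is the base change
`S ⊗_{σ,S} C` of `C` along the ring endomorphism `σ : S → S`:  it satisfies the
universal property that every `σ`-semilinear map out of `C` factors uniquely
through an `S`-linear map out of `D`. -/
def IsSigmaBaseChange {S : Type} [CommRing S] (σ : S →+* S)
    {C : Type} [AddCommGroup C] [Module S C]
    {D : Type} [AddCommGroup D] [Module S D] (ι : C →ₛₗ[σ] D) : Prop :=
  ∀ (E : Type) [AddCommGroup E] [Module S E] (j : C →ₛₗ[σ] E),
    ∃! g : D →ₗ[S] E, ∀ c : C, g (ι c) = j c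

namespace Statement0Aux

open MvPowerSeries Finsupp

noncomputable section

variable {k : Type} [Field k] {d : ℕ}

/-- total degree of an exponent -/
def dg {d : ℕ} (u : Fin d →₀ ℕ) : ℕ := ∑ i, u i

lemma dg_add (u v : Fin d →₀ ℕ) : dg (u + v) = dg u + dg v := by
  simp [dg, Finsupp.add_apply, Finset.sum_add_distrib]

lemma dg_zero : dg (0 : Fin d →₀ ℕ) = 0 := by simp [dg]

lemma dg_single (i : Fin d) : dg (Finsupp.single i 1) = 1 := by
  simp [dg, Finsupp.single_apply]

lemma dg_eq_zero {u : Fin d →₀ ℕ} (h : dg u = 0) : u = 0 := by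
  have h' := Finset.sum_eq_zero_iff.1 h
  ext i
  exact h' i (Finset.mem_univ i)

/-- the ideal of power series whose coefficients below total degree `n` vanish -/
def lowI (k : Type) [Field k] (d n : ℕ) : Ideal (MvPowerSeries (Fin d) k) where
  carrier := {f | ∀ u, dg u < n → coeff u f = 0}
  add_mem' := by
    intro f g hf hg u hu
    rw [map_add, hf u hu, hg u hu, add_zero]
  zero_mem' := by
    intro u hu
    simp
  smul_mem' := by
    intro c f hf u hu
    classical
    rw [smul_eq_mul, coeff_mul]
    apply Finset.sum_eq_zero
    rintro ⟨v, w⟩ hvw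
    rw [Finset.HasAntidiagonal.mem_antidiagonal] at hvw
    have hd : dg v + dg w < n := by rw [← dg_add, hvw]; exact hu
    rw [hf w (by omega), mul_zero]

lemma mem_lowI {n : ℕ} {f : MvPowerSeries (Fin d) k} :
    f ∈ lowI k d n ↔ ∀ u, dg u < n → coeff u f = 0 := Iff.rfl

lemma span_le_lowI1 :
    Ideal.span (Set.range (X : Fin d → MvPowerSeries (Fin d) k)) ≤ lowI k d 1 := by
  rw [Ideal.span_le]
  rintro _ ⟨i, rfl⟩
  intro u hu
  classical
  rw [coeff_X, if_neg]
  intro h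
  subst h
  rw [dg_single] at hu
  omega

lemma pow_le_lowI (n : ℕ) :
    (Ideal.span (Set.range (X : Fin d → MvPowerSeries (Fin d) k))) ^ n ≤ lowI k d n := by
  induction n with
  | zero => intro f _ u hu; exact absurd hu (Nat.not_lt_zero _)
  | succ n ih =>
    rw [pow_succ]
    refine Ideal.mul_le.2 fun f hf g hg => ?_
    intro u hu
    classical
    rw [coeff_mul]
    apply Finset.sum_eq_zero
    rintro ⟨v, w⟩ hvw
    rw [Finset.HasAntidiagonal.mem_antidiagonal] at hvw
    have hd : dg v + dg w < n + 1 := by rw [← dg_add, hvw]; exact hu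
    by_cases hw : dg w < 1
    · rw [span_le_lowI1 hg w hw, mul_zero]
    · rw [ih hf v (by omega), zero_mul]

lemma lowI_le_pow (n : ℕ) (f : MvPowerSeries (Fin d) k) (h : f ∈ lowI k d n) :
    f ∈ (Ideal.span (Set.range (X : Fin d → MvPowerSeries (Fin d) k))) ^ n := by
  induction n generalizing f with
  | zero => rw [pow_zero, Ideal.one_eq_top]; trivial
  | succ n ih =>
    classical
    set fi : Fin d → MvPowerSeries (Fin d) k := fun i v =>
      if ∀ j, j < i → v j = 0 then coeff (v + Finsupp.single i 1) f else 0 with hfi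
    have hcoeff : ∀ i v, coeff v (fi i) =
        if ∀ j, j < i → v j = 0 then coeff (v + Finsupp.single i 1) f else 0 :=
      fun i v => rfl
    have hmem : ∀ i, fi i ∈ lowI k d n := by
      intro i v hv
      rw [hcoeff]
      split
      · apply h; rw [dg_add, dg_single]; omega
      · rfl
    have hXdef : ∀ i : Fin d, (X i : MvPowerSeries (Fin d) k)
        = monomial (Finsupp.single i 1) 1 := fun i => rfl
    have hsum : f = ∑ i, X i * fi i := by
      apply MvPowerSeries.ext; intro u
      rw [map_sum]
      by_cases hu : u = 0
      · subst hu
        rw [h 0 (by rw [dg_zero]; omega)]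
        symm; apply Finset.sum_eq_zero
        intro i _
        rw [hXdef, coeff_monomial_mul, if_neg]
        intro hle
        have h1 := (Finsupp.single_le_iff).1 hle
        simp at h1
      · have hne : u.support.Nonempty := Finsupp.support_nonempty_iff.2 hu
        set i₀ := u.support.min' hne with hi₀
        have hmem₀ : i₀ ∈ u.support := Finset.min'_mem _ _
        have hu₀ : u i₀ ≠ 0 := Finsupp.mem_support_iff.1 hmem₀
        have hlt : ∀ j, j < i₀ → u j = 0 := by
          intro j hj
          by_contra hj'
          exact absurd (Finset.min'_le _ _ (Finsupp.mem_support_iff.2 hj')) (not_le.2 hj)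
        have hle₀ : Finsupp.single i₀ 1 ≤ u :=
          Finsupp.single_le_iff.2 (Nat.one_le_iff_ne_zero.2 hu₀)
        rw [Finset.sum_eq_single i₀]
        · rw [hXdef, coeff_monomial_mul, if_pos hle₀, one_mul, hcoeff, if_pos, tsub_add_cancel_of_le hle₀]
          intro j hj
          rw [Finsupp.tsub_apply, hlt j hj]
          exact Nat.zero_sub _
        · intro i _ hne'
          rw [hXdef, coeff_monomial_mul]
          rcases lt_or_gt_of_ne hne' with hlt' | hgt'
          · rw [if_neg]
            intro hle
            have h1 := Finsupp.single_le_iff.1 hle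
            rw [hlt i hlt'] at h1
            omega
          · split
            · rw [one_mul, hcoeff, if_neg]
              push_neg
              refine ⟨i₀, hgt', ?_⟩
              rw [Finsupp.tsub_apply, Finsupp.single_apply,
                if_neg (by exact fun hh => absurd hh (ne_of_gt hgt'))]
              simpa using hu₀
            · rfl
        · intro h'; exact absurd (Finset.mem_univ i₀) h'
    rw [hsum, pow_succ']
    apply Ideal.sum_mem
    intro i _
    exact Ideal.mul_mem_mul (Ideal.subset_span ⟨i, rfl⟩) (ih _ (hmem i))

lemma mul_not_low {g h : MvPowerSeries (Fin d) k} {m e : ℕ}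
    (hg0 : ∀ u, dg u < m → coeff u g = 0) (hg1 : ∃ u, dg u < m + 1 ∧ coeff u g ≠ 0)
    (hh0 : ∀ u, dg u < e → coeff u h = 0) (hh1 : ∃ u, dg u < e + 1 ∧ coeff u h ≠ 0) :
    ∃ u, dg u < m + e + 1 ∧ coeff u (g * h) ≠ 0 := by
  classical
  set G : MvPowerSeries (Fin d) k := fun u => if dg u = m then coeff u g else 0 with hG
  set H : MvPowerSeries (Fin d) k := fun u => if dg u = e then coeff u h else 0 with hH
  have hGc : ∀ u, coeff u G = if dg u = m then coeff u g else 0 := fun _ => rfl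
  have hHc : ∀ u, coeff u H = if dg u = e then coeff u h else 0 := fun _ => rfl
  have hGne : G ≠ 0 := by
    obtain ⟨u, hu1, hu2⟩ := hg1
    have hdg : dg u = m := by
      by_contra h'
      exact hu2 (hg0 u (by omega))
    intro h0
    apply hu2
    have h1 := congrArg (coeff u) h0
    rw [hGc, if_pos hdg, map_zero] at h1
    exact h1
  have hHne : H ≠ 0 := by
    obtain ⟨u, hu1, hu2⟩ := hh1
    have hdg : dg u = e := by
      by_contra h'
      exact hu2 (hh0 u (by omega))
    intro h0
    apply hu2
    have h1 := congrArg (coeff u) h0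
    rw [hHc, if_pos hdg, map_zero] at h1
    exact h1
  have hne : G * H ≠ 0 := mul_ne_zero hGne hHne
  obtain ⟨u, hu⟩ : ∃ u, coeff u (G * H) ≠ 0 := by
    by_contra h'
    push_neg at h'
    exact hne (MvPowerSeries.ext fun u => by rw [h' u, map_zero])
  have hu' := hu
  rw [coeff_mul] at hu'
  obtain ⟨⟨v, w⟩, hvw, hterm⟩ := Finset.exists_ne_zero_of_sum_ne_zero hu'
  rw [Finset.HasAntidiagonal.mem_antidiagonal] at hvw
  dsimp only at hvw hterm
  have hv : dg v = m := by
    by_contra h'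
    rw [hGc, if_neg h', zero_mul] at hterm
    exact hterm rfl
  have hw : dg w = e := by
    by_contra h'
    rw [hHc, if_neg h', mul_zero] at hterm
    exact hterm rfl
  have hdgu : dg u = m + e := by rw [← hvw, dg_add, hv, hw]
  refine ⟨u, by omega, ?_⟩
  have heq : coeff u (g * h) = coeff u (G * H) := by
    rw [coeff_mul, coeff_mul]
    apply Finset.sum_congr rfl
    rintro ⟨v', w'⟩ hvw'
    rw [Finset.HasAntidiagonal.mem_antidiagonal] at hvw'
    dsimp only at hvw' ⊢
    have hsum : dg v' + dg w' = m + e := by rw [← dg_add, hvw', hdgu]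
    rcases lt_trichotomy (dg v') m with h1 | h1 | h1
    · rw [hg0 v' h1, hGc, if_neg (by omega), zero_mul, zero_mul]
    · rw [hGc, if_pos h1, hHc, if_pos (by omega)]
    · rw [hh0 w' (by omega), hHc, if_neg (by omega), mul_zero, mul_zero]
  rw [heq]
  exact hu

section Frob

variable {p : ℕ} [ExpChar k p] [PerfectRing k p]

/-- the `a`-component of `f` in the decomposition `f = ∑ T^a σ(f_a)` -/
def comp (p : ℕ) [ExpChar k p] [PerfectRing k p] (a : Fin d →₀ ℕ)
    (f : MvPowerSeries (Fin d) k) : MvPowerSeries (Fin d) k :=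
  fun q => (frobeniusEquiv k p).symm (coeff (p • q + a) f)

lemma coeff_comp (a q : Fin d →₀ ℕ) (f : MvPowerSeries (Fin d) k) :
    coeff q (comp p a f) = (frobeniusEquiv k p).symm (coeff (p • q + a) f) := rfl

lemma comp_add (a : Fin d →₀ ℕ) (f g : MvPowerSeries (Fin d) k) :
    comp p a (f + g) = comp p a f + comp p a g := by
  apply MvPowerSeries.ext; intro q
  rw [map_add, coeff_comp, coeff_comp, coeff_comp, map_add, map_add]

open scoped Classical in
/-- the slice of `f` consisting of monomials with exponents `≡ a mod p` -/
def slice (p : ℕ) (a : Fin d →₀ ℕ) (f : MvPowerSeries (Fin d) k) : MvPowerSeries (Fin d) k :=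
  fun u => if ∃ q, u = p • q + a then coeff u f else 0

open scoped Classical in
lemma coeff_slice (a u : Fin d →₀ ℕ) (f : MvPowerSeries (Fin d) k) :
    coeff u (slice p a f) = if ∃ q, u = p • q + a then coeff u f else 0 := rfl

variable (σ : MvPowerSeries (Fin d) k →+* MvPowerSeries (Fin d) k)
variable (hσ1 : ∀ (f : MvPowerSeries (Fin d) k) (n : (Fin d) →₀ ℕ),
      MvPowerSeries.coeff (p • n) (σ f) = (MvPowerSeries.coeff n f) ^ p)
variable (hσ2 : ∀ (f : MvPowerSeries (Fin d) k) (m : (Fin d) →₀ ℕ),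
      (∀ n : (Fin d) →₀ ℕ, m ≠ p • n) → MvPowerSeries.coeff m (σ f) = 0)

include hσ1 in
lemma sigma_inj : Function.Injective σ := by
  intro f g h
  apply MvPowerSeries.ext; intro n
  have h1 := hσ1 f n
  have h2 := hσ1 g n
  rw [h] at h1
  -- h1 : coeff (p•n) (σ g) = coeff n f ^ p
  exact injective_pow_p k p (h1.symm.trans h2)

include hσ1 hσ2 in
lemma sigma_comp_mul_monomial (a : Fin d →₀ ℕ) (f : MvPowerSeries (Fin d) k) :
    σ (comp p a f) * monomial a (1 : k) = slice p a f := by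
  classical
  apply MvPowerSeries.ext; intro u
  rw [coeff_mul_monomial, coeff_slice]
  by_cases hq : ∃ q, u = p • q + a
  · obtain ⟨q, rfl⟩ := hq
    rw [if_pos (le_add_self), add_tsub_cancel_right, hσ1, coeff_comp,
      frobeniusEquiv_symm_pow_p, if_pos ⟨q, rfl⟩, mul_one]
  · rw [if_neg hq]
    split
    · next hle =>
      rw [hσ2, zero_mul]
      intro q hq'
      exact hq ⟨q, by rw [← tsub_add_cancel_of_le hle, hq']⟩
    · rfl

lemma exists_decomp {v' q w a : Fin d →₀ ℕ} (ha : ∀ i, a i < p)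
    (h : p • v' + w = p • q + a) : ∃ q'', w = p • q'' + a := by
  refine ⟨w.mapRange (· / p) (by simp), ?_⟩
  ext i
  have hi : p * v' i + w i = p * q i + a i := by
    have h' := congrArg (fun x : Fin d →₀ ℕ => x i) h
    simpa [Finsupp.add_apply, Finsupp.smul_apply, smul_eq_mul] using h'
  have hmod : w i % p = a i := by
    have h1 : (p * v' i + w i) % p = (p * q i + a i) % p := by rw [hi]
    rwa [Nat.mul_add_mod, Nat.mul_add_mod, Nat.mod_eq_of_lt (ha i)] at h1
  have hdm := Nat.div_add_mod (w i) p
  rw [Finsupp.add_apply, Finsupp.smul_apply, Finsupp.mapRange_apply, smul_eq_mul, ← hmod]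
  exact hdm.symm

include hσ2 in
lemma slice_sigma_mul (a : Fin d →₀ ℕ) (ha : ∀ i, a i < p)
    (s f : MvPowerSeries (Fin d) k) :
    slice p a (σ s * f) = σ s * slice p a f := by
  classical
  apply MvPowerSeries.ext; intro u
  rw [coeff_slice]
  by_cases hq : ∃ q, u = p • q + a
  · obtain ⟨q, rfl⟩ := hq
    rw [if_pos ⟨q, rfl⟩, coeff_mul, coeff_mul]
    apply Finset.sum_congr rfl
    rintro ⟨v, w⟩ hvw
    rw [Finset.HasAntidiagonal.mem_antidiagonal] at hvw
    dsimp only at hvw ⊢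
    by_cases hv : ∃ v', v = p • v'
    · obtain ⟨v', rfl⟩ := hv
      obtain ⟨q'', hq''⟩ := exists_decomp ha hvw
      rw [coeff_slice, if_pos ⟨q'', hq''⟩]
    · rw [hσ2 s v (fun n hn => hv ⟨n, hn⟩), zero_mul, zero_mul]
  · rw [if_neg hq, coeff_mul]
    symm
    apply Finset.sum_eq_zero
    rintro ⟨v, w⟩ hvw
    rw [Finset.HasAntidiagonal.mem_antidiagonal] at hvw
    dsimp only at hvw ⊢
    by_cases hv : ∃ v', v = p • v'
    · obtain ⟨v', rfl⟩ := hv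
      rw [coeff_slice]
      split
      · next hw =>
        obtain ⟨q'', rfl⟩ := hw
        exfalso
        apply hq
        exact ⟨v' + q'', by rw [← hvw, smul_add]; abel⟩
      · rw [mul_zero]
    · rw [hσ2 s v (fun n hn => hv ⟨n, hn⟩), zero_mul]

include hσ1 hσ2 in
lemma comp_sigma_mul (a : Fin d →₀ ℕ) (ha : ∀ i, a i < p)
    (s f : MvPowerSeries (Fin d) k) :
    comp p a (σ s * f) = s * comp p a f := by
  apply sigma_inj σ hσ1
  have hmono : (monomial a (1 : k) : MvPowerSeries (Fin d) k) ≠ 0 := by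
    intro h0
    have := congrArg (coeff a) h0
    rw [coeff_monomial_same, map_zero] at this
    exact one_ne_zero this
  apply mul_right_cancel₀ hmono
  rw [sigma_comp_mul_monomial σ hσ1 hσ2, slice_sigma_mul σ hσ2 a ha, map_mul, mul_assoc,
    sigma_comp_mul_monomial σ hσ1 hσ2]

include hσ1 hσ2 in
lemma comp_annihilates
    {C : Type} [AddCommGroup C] [Module (MvPowerSeries (Fin d) k) C]
    {D : Type} [AddCommGroup D] [Module (MvPowerSeries (Fin d) k) D]
    (ι : C →ₛₗ[σ] D) (hD : IsSigmaBaseChange σ ι)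
    (G : MvPowerSeries (Fin d) k) (hGD : ∀ x : D, G • x = 0)
    (a : Fin d →₀ ℕ) (ha : ∀ i, a i < p) (c : C) :
    (comp p a G) • c = 0 := by
  classical
  set W : Submodule (MvPowerSeries (Fin d) k) (TensorProduct ℤ (MvPowerSeries (Fin d) k) C) :=
    Submodule.span (MvPowerSeries (Fin d) k)
      { x : TensorProduct ℤ (MvPowerSeries (Fin d) k) C |
        ∃ (s : MvPowerSeries (Fin d) k) (c' : C),
          x = (σ s) ⊗ₜ[ℤ] c' - (1 : MvPowerSeries (Fin d) k) ⊗ₜ[ℤ] (s • c') } with hWdef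
  have hsmul_t : ∀ (s x : MvPowerSeries (Fin d) k) (c' : C),
      s • (x ⊗ₜ[ℤ] c' : TensorProduct ℤ (MvPowerSeries (Fin d) k) C) = (s * x) ⊗ₜ[ℤ] c' := by
    intro s x c'
    rw [TensorProduct.smul_tmul', smul_eq_mul]
  let j : C →ₛₗ[σ] (TensorProduct ℤ (MvPowerSeries (Fin d) k) C ⧸ W) :=
    { toFun := fun c' => Submodule.Quotient.mk
        ((1 : MvPowerSeries (Fin d) k) ⊗ₜ[ℤ] c'),
      map_add' := by
        intro c₁ c₂
        rw [← Submodule.Quotient.mk_add, TensorProduct.tmul_add]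
      map_smul' := by
        intro s c'
        show Submodule.Quotient.mk _ = σ s • Submodule.Quotient.mk _
        rw [← Submodule.Quotient.mk_smul, hsmul_t, mul_one, Submodule.Quotient.eq]
        have hmem : ((σ s) ⊗ₜ[ℤ] c' - (1 : MvPowerSeries (Fin d) k) ⊗ₜ[ℤ] (s • c')
            : TensorProduct ℤ (MvPowerSeries (Fin d) k) C) ∈ W :=
          Submodule.subset_span ⟨s, c', rfl⟩
        have := W.neg_mem hmem
        rwa [neg_sub] at this }
  obtain ⟨gm, hgm, -⟩ := hD (TensorProduct ℤ (MvPowerSeries (Fin d) k) C ⧸ W) j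
  have hGj : (G ⊗ₜ[ℤ] c : TensorProduct ℤ (MvPowerSeries (Fin d) k) C) ∈ W := by
    have h1 : G • j c = 0 := by
      rw [← hgm c, ← map_smul, hGD, map_zero]
    have h2 : G • j c = Submodule.Quotient.mk
        ((G ⊗ₜ[ℤ] c : TensorProduct ℤ (MvPowerSeries (Fin d) k) C)) := by
      show G • Submodule.Quotient.mk _ = _
      rw [← Submodule.Quotient.mk_smul, hsmul_t, mul_one]
    rw [h2] at h1
    exact (Submodule.Quotient.mk_eq_zero _).1 h1
  let inner : MvPowerSeries (Fin d) k → C →ₗ[ℤ] C := fun s =>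
    (AddMonoidHom.mk' (fun c' => (comp p a s) • c')
      (fun c₁ c₂ => smul_add _ c₁ c₂)).toIntLinearMap
  let B : MvPowerSeries (Fin d) k →ₗ[ℤ] C →ₗ[ℤ] C :=
    (AddMonoidHom.mk' inner (by
      intro s₁ s₂
      apply LinearMap.ext
      intro c'
      show (comp p a (s₁ + s₂)) • c' = (comp p a s₁) • c' + (comp p a s₂) • c'
      rw [comp_add, add_smul])).toIntLinearMap
  let π : TensorProduct ℤ (MvPowerSeries (Fin d) k) C →ₗ[ℤ] C := TensorProduct.lift B
  have hπ : ∀ (s : MvPowerSeries (Fin d) k) (c' : C),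
      π (s ⊗ₜ[ℤ] c') = (comp p a s) • c' := fun s c' => rfl
  have hπW : ∀ x ∈ W, ∀ rr : MvPowerSeries (Fin d) k, π (rr • x) = 0 := by
    intro x hx
    refine Submodule.span_induction ?_ ?_ ?_ ?_ hx
    · rintro x' ⟨s, c', rfl⟩ rr
      rw [smul_sub, map_sub, hsmul_t, hsmul_t, mul_one, hπ, hπ]
      rw [mul_comm rr (σ s), comp_sigma_mul σ hσ1 hσ2 a ha]
      rw [mul_comm s (comp p a rr), mul_smul, sub_self]
    · intro rr; rw [smul_zero, map_zero]
    · intro x y _ _ hx' hy' rr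
      rw [smul_add, map_add, hx' rr, hy' rr, add_zero]
    · intro r x _ hx' rr
      rw [smul_smul, hx' (rr * r)]
  have h1 := hπW _ hGj 1
  rw [one_smul, hπ] at h1
  exact h1


end Frob

end

end Statement0Aux


/-- Let `k` be a perfect field of characteristic `p`,
`S̄ = k[[T₁,…,T_d]]` with maximal ideal `r̄ = (T₁,…,T_d)`, and `σ : S̄ → S̄` the
Frobenius-semilinear endomorphism with `σ(Tᵢ) = Tᵢᵖ` (characterized on
coefficients by `coeff (p•n) (σ f) = (coeff n f)^p` and vanishing of all other
coefficients).  Let `hbar ∈ r̄` have order `e ≤ p−2` (i.e. `hbar ∈ r̄^e \ r̄^{e+1}`).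
Let `C` be an `S̄`-module annihilated by some `f ≠ 0` and `φ : C → C^{(σ)}`
an `S̄`-linear map whose cokernel is annihilated by `hbar`.  Then `C = 0`. -/
theorem statement0 (p : ℕ) (hp : p.Prime) (k : Type) [Field k] [CharP k p] [ExpChar k p]
    [PerfectRing k p] (d : ℕ)
    (σ : MvPowerSeries (Fin d) k →+* MvPowerSeries (Fin d) k)
    (hσ1 : ∀ (f : MvPowerSeries (Fin d) k) (n : (Fin d) →₀ ℕ),
      MvPowerSeries.coeff (p • n) (σ f) = (MvPowerSeries.coeff n f) ^ p)
    (hσ2 : ∀ (f : MvPowerSeries (Fin d) k) (m : (Fin d) →₀ ℕ),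
      (∀ n : (Fin d) →₀ ℕ, m ≠ p • n) → MvPowerSeries.coeff m (σ f) = 0)
    (hbar : MvPowerSeries (Fin d) k) (e : ℕ) (he : e ≤ p - 2)
    (hmem : hbar ∈ Ideal.span (Set.range (MvPowerSeries.X : Fin d → MvPowerSeries (Fin d) k)))
    (hord1 : hbar ∈ (Ideal.span (Set.range (MvPowerSeries.X : Fin d → MvPowerSeries (Fin d) k))) ^ e)
    (hord2 : hbar ∉ (Ideal.span (Set.range (MvPowerSeries.X : Fin d → MvPowerSeries (Fin d) k))) ^ (e + 1))
    (C : Type) [AddCommGroup C] [Module (MvPowerSeries (Fin d) k) C]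
    (f : MvPowerSeries (Fin d) k) (hf : f ≠ 0) (hfC : ∀ c : C, f • c = 0)
    (D : Type) [AddCommGroup D] [Module (MvPowerSeries (Fin d) k) D]
    (ι : C →ₛₗ[σ] D) (hD : IsSigmaBaseChange σ ι)
    (φ : C →ₗ[MvPowerSeries (Fin d) k] D)
    (hcoker : ∀ x : D, ∃ c : C, hbar • x = φ c) :
    Subsingleton C := by
  classical
  obtain ⟨u₀, hu₀⟩ : ∃ u, MvPowerSeries.coeff u f ≠ 0 := by
    by_contra h'
    push_neg at h'
    exact hf (MvPowerSeries.ext fun u => by rw [h' u, map_zero])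
  set r : Ideal (MvPowerSeries (Fin d) k) :=
    Ideal.span (Set.range (MvPowerSeries.X : Fin d → MvPowerSeries (Fin d) k)) with hrdef
  set P : ℕ → Prop :=
    fun n => ∀ g : MvPowerSeries (Fin d) k, (∀ c : C, g • c = 0) → g ∈ r ^ n with hPdef
  have hP0 : P 0 := fun g _ => by rw [pow_zero, Ideal.one_eq_top]; trivial
  have hPB : ¬ P (Statement0Aux.dg u₀ + 1) := by
    intro hPB
    exact hu₀ (Statement0Aux.pow_le_lowI _ (hPB f hfC) u₀ (by omega))
  set m := Nat.findGreatest P (Statement0Aux.dg u₀) with hmdef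
  have hPm : P m := Nat.findGreatest_spec (Nat.zero_le _) hP0
  have hnot : ¬ P (m + 1) := by
    rcases Nat.lt_or_ge (Statement0Aux.dg u₀) (m + 1) with h' | h'
    · have hm_le : m ≤ Statement0Aux.dg u₀ := Nat.findGreatest_le _
      have hme : m = Statement0Aux.dg u₀ := by omega
      rw [hme]; exact hPB
    · exact Nat.findGreatest_is_greatest (Nat.lt_succ_self m) h'
  obtain ⟨g, hgC, hg1⟩ :
      ∃ g : MvPowerSeries (Fin d) k, (∀ c : C, g • c = 0) ∧ g ∉ r ^ (m + 1) := by
    by_contra h'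
    push_neg at h'
    exact hnot fun g hg => h' g hg
  have hg0 : g ∈ r ^ m := hPm g hgC
  rcases Nat.eq_zero_or_pos m with hm0 | hm1
  · have hgu : IsUnit g := by
      rw [MvPowerSeries.isUnit_iff_constantCoeff, isUnit_iff_ne_zero]
      intro hc
      apply hg1
      apply Statement0Aux.lowI_le_pow
      intro u hu
      rw [hm0] at hu
      have h0 : u = 0 := Statement0Aux.dg_eq_zero (by omega)
      subst h0
      rw [MvPowerSeries.coeff_zero_eq_constantCoeff]
      exact hc
    obtain ⟨gu, hgu'⟩ := hgu
    have hz : ∀ c : C, c = 0 := by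
      intro c
      have h1 : ((gu⁻¹ : (MvPowerSeries (Fin d) k)ˣ) : MvPowerSeries (Fin d) k) • g • c = c := by
        rw [← mul_smul, ← hgu', Units.inv_mul, one_smul]
      rw [hgC c, smul_zero] at h1
      exact h1.symm
    exact ⟨fun a b => by rw [hz a, hz b]⟩
  · exfalso
    set G := g * hbar with hGdef
    have hGD : ∀ x : D, G • x = 0 := by
      intro x
      obtain ⟨c, hc⟩ := hcoker x
      rw [hGdef, mul_smul, hc, ← map_smul, hgC c, map_zero]
    have hcompa : ∀ a : Fin d →₀ ℕ, (∀ i, a i < p) →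
        Statement0Aux.comp p a G ∈ r ^ m := by
      intro a ha
      exact hPm _ (fun c => Statement0Aux.comp_annihilates σ hσ1 hσ2 ι hD G hGD a ha c)
    have hGpm : G ∈ r ^ (p * m) := by
      apply Statement0Aux.lowI_le_pow
      intro u hu
      set q : Fin d →₀ ℕ := u.mapRange (· / p) (by simp) with hqdef
      set a : Fin d →₀ ℕ := u.mapRange (· % p) (Nat.zero_mod p) with hadef
      have ha : ∀ i, a i < p := by
        intro i
        rw [hadef, Finsupp.mapRange_apply]
        exact Nat.mod_lt _ hp.pos
      have hu_eq : u = p • q + a := by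
        ext i
        rw [Finsupp.add_apply, Finsupp.smul_apply, hqdef, hadef, Finsupp.mapRange_apply,
          Finsupp.mapRange_apply, smul_eq_mul]
        exact (Nat.div_add_mod (u i) p).symm
      have hdg : p * Statement0Aux.dg q ≤ Statement0Aux.dg u := by
        rw [hu_eq, Statement0Aux.dg_add]
        have : Statement0Aux.dg (p • q) = p * Statement0Aux.dg q := by
          unfold Statement0Aux.dg
          rw [Finset.mul_sum]
          apply Finset.sum_congr rfl
          intro i _
          rw [Finsupp.smul_apply, smul_eq_mul]
        omega
      have hq : Statement0Aux.dg q < m := by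
        have h3 : p * Statement0Aux.dg q < p * m := lt_of_le_of_lt hdg hu
        exact Nat.lt_of_mul_lt_mul_left h3
      have h1 : MvPowerSeries.coeff q (Statement0Aux.comp p a G) = 0 :=
        Statement0Aux.pow_le_lowI m (hcompa a ha) q hq
      rw [Statement0Aux.coeff_comp] at h1
      have h2 := congrArg (frobeniusEquiv k p) h1
      rw [RingEquiv.apply_symm_apply, map_zero] at h2
      rw [hu_eq]
      exact h2
    have hGnot : G ∉ r ^ (m + e + 1) := by
      intro hmem'
      have hlow := Statement0Aux.pow_le_lowI _ hmem'
      have hg0' : ∀ u, Statement0Aux.dg u < m → MvPowerSeries.coeff u g = 0 :=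
        fun u hu => Statement0Aux.pow_le_lowI m hg0 u hu
      have hg1' : ∃ u, Statement0Aux.dg u < m + 1 ∧ MvPowerSeries.coeff u g ≠ 0 := by
        by_contra h'
        push_neg at h'
        exact hg1 (Statement0Aux.lowI_le_pow _ _ (fun u hu => h' u hu))
      have hh0' : ∀ u, Statement0Aux.dg u < e → MvPowerSeries.coeff u hbar = 0 :=
        fun u hu => Statement0Aux.pow_le_lowI e hord1 u hu
      have hh1' : ∃ u, Statement0Aux.dg u < e + 1 ∧ MvPowerSeries.coeff u hbar ≠ 0 := by
        by_contra h'
        push_neg at h'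
        exact hord2 (Statement0Aux.lowI_le_pow _ _ (fun u hu => h' u hu))
      obtain ⟨u, hu1, hu2⟩ := Statement0Aux.mul_not_low hg0' hg1' hh0' hh1'
      exact hu2 (hlow u hu1)
    have hple : ¬ (m + e + 1 ≤ p * m) := fun hle =>
      hGnot (Ideal.pow_le_pow_right hle hGpm)
    apply hple
    have hp2 : 2 ≤ p := hp.two_le
    calc m + e + 1 ≤ m + (p - 1) := by omega
    _ ≤ m + (p - 1) * m := Nat.add_le_add_left (Nat.le_mul_of_pos_right (p - 1) hm1) m
    _ = p * m := by
      have h3 : p - 1 + 1 = p := by omega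
      rw [Nat.add_comm, ← Nat.succ_mul, Nat.succ_eq_add_one, h3]
end

section
/- Let k be a perfect field of characteristic p, S̄ = k[[T₁,…,T_d]], σ the Frobenius endomorphism with σ(Tᵢ)=Tᵢᵖ. Let h̄ ∈ S̄ have order exactly p−1 and suppose the initial form of h̄ in the graded ring k[T₁,…,T_d] does not generate an ideal which is a (p−1)-th power. Let C be an S̄-module annihilated by some nonzero f ∈ S̄, equipped with an S̄-linear map φ: C → C^{(σ)} whose cokernel is annihilated by h̄. Then C = 0. -/
open Finset

namespace St1

section TwistedDefs

variable {R : Type} [CommRing R]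

/-- `R` viewed as an `R`-algebra via `σ`. -/
def Twisted (_σ : R →+* R) : Type := R

instance (σ : R →+* R) : CommRing (Twisted σ) := inferInstanceAs (CommRing R)

/-- `σ` as a ring hom into the twisted copy. -/
def twistedHom (σ : R →+* R) : R →+* Twisted σ := σ

/-- the identity, as a ring hom into the twisted copy. -/
def untwist (σ : R →+* R) : R →+* Twisted σ := RingHom.id R

noncomputable instance (σ : R →+* R) : Algebra R (Twisted σ) := (twistedHom σ).toAlgebra

lemma twisted_smul (σ : R →+* R) (r : R) (a : Twisted σ) :
    r • a = twistedHom σ r * a := by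
  rw [Algebra.smul_def, RingHom.algebraMap_toAlgebra]

variable (σ : R →+* R) (C : Type) [AddCommGroup C] [Module R C]

/-- the base change of `C` along `σ`, with its natural (untwisted) module structure -/
def TwistedTensor : Type := TensorProduct R (Twisted σ) C

noncomputable instance : AddCommGroup (TwistedTensor σ C) :=
  inferInstanceAs (AddCommGroup (TensorProduct R (Twisted σ) C))

noncomputable instance : Module (Twisted σ) (TwistedTensor σ C) :=
  inferInstanceAs (Module (Twisted σ) (TensorProduct R (Twisted σ) C))

noncomputable instance : Module R (TwistedTensor σ C) :=
  Module.compHom _ (untwist σ)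

/-- untwisting map -/
def unTw (σ : R →+* R) : Twisted σ → R := id

lemma unTw_smul (σ : R →+* R) (r : R) (a : Twisted σ) :
    unTw σ (r • a) = σ r * unTw σ a := twisted_smul σ r a

lemma unTw_add (σ : R →+* R) (a b : Twisted σ) :
    unTw σ (a + b) = unTw σ a + unTw σ b := rfl

/-- the canonical pure tensor -/
noncomputable def TwistedTensor.mk (a : Twisted σ) (c : C) : TwistedTensor σ C :=
  TensorProduct.tmul R a c

lemma TwistedTensor.smul_mk (r : R) (a : Twisted σ) (c : C) :
    r • (TwistedTensor.mk σ C a c) = TwistedTensor.mk σ C (untwist σ r * a) c := by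
  show (untwist σ r) • (a ⊗ₜ[R] c) = ((untwist σ r * a) ⊗ₜ[R] c : TensorProduct R (Twisted σ) C)
  rw [TensorProduct.smul_tmul', smul_eq_mul]

lemma TwistedTensor.mk_smul (r : R) (a : Twisted σ) (c : C) :
    TwistedTensor.mk σ C a (r • c) = TwistedTensor.mk σ C (twistedHom σ r * a) c := by
  show a ⊗ₜ[R] (r • c) = ((twistedHom σ r * a) ⊗ₜ[R] c : TensorProduct R (Twisted σ) C)
  rw [← TensorProduct.smul_tmul, twisted_smul, mul_comm]

/-- evaluating a bilinear map on the base change -/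
noncomputable def TwistedTensor.lower (B : Twisted σ →ₗ[R] C →ₗ[R] C) :
    TwistedTensor σ C → C :=
  fun x => TensorProduct.lift B (x : TensorProduct R (Twisted σ) C)

lemma TwistedTensor.lower_mk (B : Twisted σ →ₗ[R] C →ₗ[R] C) (a : Twisted σ) (c : C) :
    TwistedTensor.lower σ C B (TwistedTensor.mk σ C a c) = B a c :=
  TensorProduct.lift.tmul a c

lemma TwistedTensor.lower_zero (B : Twisted σ →ₗ[R] C →ₗ[R] C) :
    TwistedTensor.lower σ C B 0 = 0 :=
  map_zero (TensorProduct.lift B)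

end TwistedDefs

variable {d : ℕ}

/-- total degree of an exponent -/
def deg (m : Fin d →₀ ℕ) : ℕ := ∑ i, m i

lemma deg_sum_eq (m : Fin d →₀ ℕ) : (m.sum fun _ v => v) = deg m :=
  Finsupp.sum_fintype _ _ (fun _ => rfl)

lemma deg_add (a b : Fin d →₀ ℕ) : deg (a + b) = deg a + deg b := by
  simp [deg, Finset.sum_add_distrib]

lemma deg_smul (c : ℕ) (m : Fin d →₀ ℕ) : deg (c • m) = c * deg m := by
  simp [deg, Finset.mul_sum]

@[simp] lemma deg_zero : deg (0 : Fin d →₀ ℕ) = 0 := by simp [deg]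

lemma deg_eq_zero_iff (m : Fin d →₀ ℕ) : deg m = 0 ↔ m = 0 := by
  constructor
  · intro h
    ext i
    have := Finset.sum_eq_zero_iff.1 h i (mem_univ i)
    simpa using this
  · rintro rfl; simp

lemma le_deg (m : Fin d →₀ ℕ) (i : Fin d) : m i ≤ deg m :=
  Finset.single_le_sum (fun _ _ => Nat.zero_le _) (mem_univ i)

lemma deg_single (i : Fin d) (c : ℕ) : deg (Finsupp.single i c) = c := by
  simp [deg, Finsupp.single_apply]

lemma deg_mono {a b : Fin d →₀ ℕ} (h : a ≤ b) : deg a ≤ deg b :=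
  Finset.sum_le_sum fun i _ => (Finsupp.le_def.1 h) i

lemma deg_eq_one {m : Fin d →₀ ℕ} (h : deg m = 1) : ∃ i, m = Finsupp.single i 1 := by
  have hne : m ≠ 0 := by
    intro h0; rw [h0] at h; simp at h
  obtain ⟨i, hi⟩ : ∃ i, m i ≠ 0 := by
    by_contra hc
    push_neg at hc
    exact hne (Finsupp.ext fun i => hc i)
  refine ⟨i, Finsupp.ext fun j => ?_⟩
  rcases eq_or_ne j i with rfl | hji
  · have h1 : m j ≤ 1 := h ▸ le_deg m j
    have : 1 ≤ m j := Nat.one_le_iff_ne_zero.2 hi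
    simp [Finsupp.single_apply]; omega
  · -- m j = 0
    have : m i + m j ≤ deg m := by
      rw [deg]
      have := Finset.add_sum_erase univ m (mem_univ i)
      rw [← this]
      have hj : j ∈ univ.erase i := Finset.mem_erase.2 ⟨hji, mem_univ j⟩
      have := Finset.single_le_sum (f := m) (fun _ _ => Nat.zero_le _) hj
      omega
    rw [h] at this
    have : m j = 0 := by omega
    simp [Finsupp.single_apply, Ne.symm hji, this]

variable {p : ℕ}

/-- componentwise quotient by `p` -/
noncomputable def qd (p : ℕ) (m : Fin d →₀ ℕ) : Fin d →₀ ℕ := m.mapRange (· / p) (Nat.zero_div _)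

/-- componentwise remainder mod `p` -/
noncomputable def rd (p : ℕ) (m : Fin d →₀ ℕ) : Fin d →₀ ℕ := m.mapRange (· % p) (Nat.zero_mod _)

@[simp] lemma qd_apply (m : Fin d →₀ ℕ) (i : Fin d) : qd p m i = m i / p :=
  Finsupp.mapRange_apply
@[simp] lemma rd_apply (m : Fin d →₀ ℕ) (i : Fin d) : rd p m i = m i % p :=
  Finsupp.mapRange_apply

lemma qd_rd (m : Fin d →₀ ℕ) : p • qd p m + rd p m = m := by
  ext i
  simp [Nat.div_add_mod]

lemma rd_lt (hp : 0 < p) (m : Fin d →₀ ℕ) (i : Fin d) : rd p m i < p := by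
  simp [Nat.mod_lt _ hp]

lemma qd_smul_add (hp : 0 < p) (n e : Fin d →₀ ℕ) (he : ∀ i, e i < p) :
    qd p (p • n + e) = n := by
  ext i
  simp only [qd_apply, Finsupp.add_apply, Finsupp.smul_apply, smul_eq_mul]
  rw [Nat.mul_add_div hp, Nat.div_eq_of_lt (he i), add_zero]

lemma rd_smul_add (n e : Fin d →₀ ℕ) (he : ∀ i, e i < p) :
    rd p (p • n + e) = e := by
  ext i
  simp only [rd_apply, Finsupp.add_apply, Finsupp.smul_apply, smul_eq_mul]
  rw [Nat.mul_add_mod, Nat.mod_eq_of_lt (he i)]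


section Series

variable {k : Type} [Field k] [CharP k p] [ExpChar k p] [PerfectRing k p]

open MvPowerSeries

/-- extract the coefficients congruent to `e` mod `p`, taking `p`-th roots -/
noncomputable def pihat (p : ℕ) [ExpChar k p] [PerfectRing k p] (e : Fin d →₀ ℕ)
    (g : MvPowerSeries (Fin d) k) : MvPowerSeries (Fin d) k :=
  fun n => (frobeniusEquiv k p).symm (MvPowerSeries.coeff (p • n + e) g)

lemma coeff_pihat (e : Fin d →₀ ℕ) (g : MvPowerSeries (Fin d) k) (n : Fin d →₀ ℕ) :
    MvPowerSeries.coeff n (pihat p e g) =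
      (frobeniusEquiv k p).symm (MvPowerSeries.coeff (p • n + e) g) := rfl

lemma pihat_add (e : Fin d →₀ ℕ) (g h : MvPowerSeries (Fin d) k) :
    pihat p e (g + h) = pihat p e g + pihat p e h := by
  apply MvPowerSeries.ext
  intro n
  simp [coeff_pihat, map_add]

variable (σ : MvPowerSeries (Fin d) k →+* MvPowerSeries (Fin d) k)

lemma qd_psmul (hp : 0 < p) (a : Fin d →₀ ℕ) : qd p (p • a) = a := by
  ext i
  simp [Nat.mul_div_cancel_left _ hp]

lemma le_of_psmul_add_eq (hp : 0 < p) {e a c n : Fin d →₀ ℕ} (he : ∀ i, e i < p)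
    (h : p • a + c = p • n + e) : a ≤ n := by
  intro i
  have hi := congrArg (fun f : Fin d →₀ ℕ => f i) h
  simp only [Finsupp.add_apply, Finsupp.smul_apply, smul_eq_mul] at hi
  have h1 : p * a i ≤ p * n i + e i := by omega
  have h2 : p * a i < p * (n i + 1) := by rw [Nat.mul_succ]; have := he i; omega
  exact Nat.lt_succ_iff.1 (Nat.lt_of_mul_lt_mul_left h2)

lemma snd_of_psmul_add_eq (hp : 0 < p) {e a c n : Fin d →₀ ℕ} (he : ∀ i, e i < p)
    (h : p • a + c = p • n + e) : c = p • (n - a) + e := by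
  have ha := le_of_psmul_add_eq hp he h
  ext i
  have hi := congrArg (fun f : Fin d →₀ ℕ => f i) h
  have hai := ha i
  simp only [Finsupp.add_apply, Finsupp.smul_apply, smul_eq_mul, Finsupp.tsub_apply] at hi ⊢
  rw [Nat.mul_sub]
  have hle : p * a i ≤ p * n i := Nat.mul_le_mul_left p hai
  omega

lemma coeff_sigma_mul
    (hσ1 : ∀ (f : MvPowerSeries (Fin d) k) (n : (Fin d) →₀ ℕ),
      MvPowerSeries.coeff (p • n) (σ f) = (MvPowerSeries.coeff n f) ^ p)
    (hσ2 : ∀ (f : MvPowerSeries (Fin d) k) (m : (Fin d) →₀ ℕ),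
      (∀ n : (Fin d) →₀ ℕ, m ≠ p • n) → MvPowerSeries.coeff m (σ f) = 0)
    (hp : 0 < p) (e : Fin d →₀ ℕ) (he : ∀ i, e i < p)
    (r g : MvPowerSeries (Fin d) k) (n : Fin d →₀ ℕ) :
    MvPowerSeries.coeff (p • n + e) (σ r * g) =
      ∑ x ∈ Finset.HasAntidiagonal.antidiagonal n,
        (MvPowerSeries.coeff x.1 r) ^ p * MvPowerSeries.coeff (p • x.2 + e) g := by
  classical
  rw [MvPowerSeries.coeff_mul]
  refine Finset.sum_bij_ne_zero (fun x _ _ => (qd p x.1, n - qd p x.1)) ?_ ?_ ?_ ?_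
  · -- membership
    rintro ⟨x1, x2⟩ hx hne
    rw [Finset.HasAntidiagonal.mem_antidiagonal] at hx
    obtain ⟨a, rfl⟩ : ∃ a, x1 = p • a := by
      by_contra hc
      push_neg at hc
      exact (left_ne_zero_of_mul hne) (hσ2 r x1 fun nn h => hc nn h)
    have ha : a ≤ n := le_of_psmul_add_eq hp he hx
    dsimp only
    rw [Finset.HasAntidiagonal.mem_antidiagonal, qd_psmul hp]
    ext i
    have hai := ha i
    simp only [Finsupp.add_apply, Finsupp.tsub_apply]
    omega
  · -- injectivity
    rintro ⟨x1, x2⟩ h1 h1' ⟨y1, y2⟩ h2 h2' heq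
    rw [Finset.HasAntidiagonal.mem_antidiagonal] at h1 h2
    obtain ⟨a, rfl⟩ : ∃ a, x1 = p • a := by
      by_contra hc; push_neg at hc
      exact (left_ne_zero_of_mul h1') (hσ2 r x1 fun nn h => hc nn h)
    obtain ⟨b, rfl⟩ : ∃ b, y1 = p • b := by
      by_contra hc; push_neg at hc
      exact (left_ne_zero_of_mul h2') (hσ2 r y1 fun nn h => hc nn h)
    dsimp only at heq
    rw [qd_psmul hp, qd_psmul hp] at heq
    simp only [Prod.mk.injEq] at heq
    have hab : a = b := heq.1
    subst hab
    have : x2 = y2 := add_left_cancel (h1.trans h2.symm)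
    rw [this]
  · -- surjectivity
    rintro ⟨a, b⟩ hab hne
    rw [Finset.HasAntidiagonal.mem_antidiagonal] at hab
    refine ⟨(p • a, p • b + e), ?_, ?_, ?_⟩
    · rw [Finset.HasAntidiagonal.mem_antidiagonal]
      show p • a + (p • b + e) = p • n + e
      rw [← add_assoc, ← smul_add, hab]
    · show MvPowerSeries.coeff (p • a) (σ r) * _ ≠ 0
      rw [hσ1 r a]
      exact hne
    · dsimp only
      rw [qd_psmul hp]
      simp only [Prod.mk.injEq]
      refine ⟨by simp, by rw [← hab, add_tsub_cancel_left]⟩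
  · -- values
    rintro ⟨x1, x2⟩ hx hne
    rw [Finset.HasAntidiagonal.mem_antidiagonal] at hx
    obtain ⟨a, rfl⟩ : ∃ a, x1 = p • a := by
      by_contra hc; push_neg at hc
      exact (left_ne_zero_of_mul hne) (hσ2 r x1 fun nn h => hc nn h)
    dsimp only
    rw [qd_psmul hp]
    have hx2 : x2 = p • (n - a) + e := snd_of_psmul_add_eq hp he hx
    rw [hx2, hσ1 r a]

lemma pihat_smul
    (hσ1 : ∀ (f : MvPowerSeries (Fin d) k) (n : (Fin d) →₀ ℕ),
      MvPowerSeries.coeff (p • n) (σ f) = (MvPowerSeries.coeff n f) ^ p)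
    (hσ2 : ∀ (f : MvPowerSeries (Fin d) k) (m : (Fin d) →₀ ℕ),
      (∀ n : (Fin d) →₀ ℕ, m ≠ p • n) → MvPowerSeries.coeff m (σ f) = 0)
    (hp : 0 < p) (e : Fin d →₀ ℕ) (he : ∀ i, e i < p)
    (r g : MvPowerSeries (Fin d) k) :
    pihat p e (σ r * g) = r * pihat p e g := by
  apply MvPowerSeries.ext
  intro n
  rw [coeff_pihat, coeff_sigma_mul σ hσ1 hσ2 hp e he r g n, map_sum]
  rw [MvPowerSeries.coeff_mul]
  refine Finset.sum_congr rfl ?_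
  rintro ⟨a, b⟩ hab
  rw [map_mul]
  have h1 : (MvPowerSeries.coeff a r) ^ p = frobeniusEquiv k p (MvPowerSeries.coeff a r) := rfl
  rw [h1, RingEquiv.symm_apply_apply]
  rfl


/-- "order at least `u`" -/
def OrdGE (g : MvPowerSeries (Fin d) k) (u : ℕ) : Prop :=
  ∀ m, deg m < u → MvPowerSeries.coeff m g = 0

lemma ordGE_mul {x y : MvPowerSeries (Fin d) k} {a b : ℕ}
    (hx : OrdGE x a) (hy : OrdGE y b) : OrdGE (x * y) (a + b) := by
  classical
  intro m hm
  rw [MvPowerSeries.coeff_mul]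
  apply Finset.sum_eq_zero
  rintro ⟨i, j⟩ hij
  rw [Finset.HasAntidiagonal.mem_antidiagonal] at hij
  have hd : deg i + deg j < a + b := by rw [← deg_add, hij]; exact hm
  rcases lt_or_ge (deg i) a with h | h
  · rw [hx i h, zero_mul]
  · have : deg j < b := by omega
    rw [hy j this, mul_zero]

lemma ordGE_zero (g : MvPowerSeries (Fin d) k) : OrdGE g 0 :=
  fun m hm => absurd hm (Nat.not_lt_zero _)

/-- the ideal of series of order at least `u` -/
def lowIdeal (u : ℕ) : Ideal (MvPowerSeries (Fin d) k) where
  carrier := {g | OrdGE g u}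
  add_mem' := fun hx hy m hm => by
    rw [map_add, hx m hm, hy m hm, add_zero]
  zero_mem' := fun m _ => map_zero _
  smul_mem' := fun c x hx => by
    have := ordGE_mul (ordGE_zero c) hx
    rw [zero_add] at this
    exact this

lemma span_X_pow_le (n : ℕ) :
    (Ideal.span (Set.range (MvPowerSeries.X : Fin d → MvPowerSeries (Fin d) k))) ^ n ≤
      lowIdeal (k := k) n := by
  induction n with
  | zero => intro g _ m hm; exact absurd hm (by omega)
  | succ n ih =>
    rw [pow_succ]
    refine Ideal.mul_le.2 fun r hr s hs => ?_
    have h1 : OrdGE s 1 := by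
      have hle : Ideal.span (Set.range (MvPowerSeries.X : Fin d → MvPowerSeries (Fin d) k)) ≤
          lowIdeal (k := k) 1 := by
        rw [Ideal.span_le]
        rintro _ ⟨i, rfl⟩
        intro m hm
        have hm0 : m = 0 := (deg_eq_zero_iff m).1 (by omega)
        subst hm0
        classical
        rw [MvPowerSeries.coeff_X]
        rw [if_neg]
        intro hcon
        have := congrArg (fun f : Fin d →₀ ℕ => f i) hcon
        simp [Finsupp.single_apply] at this
      exact hle hs
    exact ordGE_mul (ih hr) h1

lemma mem_span_X_pow {n : ℕ} {g : MvPowerSeries (Fin d) k} (hg : OrdGE g n) :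
    g ∈ (Ideal.span (Set.range (MvPowerSeries.X : Fin d → MvPowerSeries (Fin d) k))) ^ n := by
  classical
  induction n generalizing g with
  | zero => simp
  | succ n ih =>
    set gi : Fin d → MvPowerSeries (Fin d) k := fun i m' =>
      if (m' + Finsupp.single i 1).support.min = (i : WithTop (Fin d)) then
        MvPowerSeries.coeff (m' + Finsupp.single i 1) g else 0 with hgi_def
    have hcoeff : ∀ i m', MvPowerSeries.coeff m' (gi i) =
        if (m' + Finsupp.single i 1).support.min = (i : WithTop (Fin d)) then
          MvPowerSeries.coeff (m' + Finsupp.single i 1) g else 0 := fun i m' => rfl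
    have hgi : ∀ i, OrdGE (gi i) n := by
      intro i m' hm'
      rw [hcoeff]
      split
      · apply hg
        rw [deg_add, deg_single]
        omega
      · rfl
    have hsum : g = ∑ i, MvPowerSeries.X i * gi i := by
      apply MvPowerSeries.ext
      intro m
      rw [map_sum]
      have hterm : ∀ i, MvPowerSeries.coeff m (MvPowerSeries.X i * gi i) =
          if Finsupp.single i 1 ≤ m then
            MvPowerSeries.coeff (m - Finsupp.single i 1) (gi i) else 0 := by
        intro i
        rw [MvPowerSeries.X, MvPowerSeries.coeff_monomial_mul]
        split <;> simp
      rcases eq_or_ne m 0 with rfl | hm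
      · rw [hg 0 (by simp)]
        symm; apply Finset.sum_eq_zero
        intro i _
        rw [hterm i, if_neg]
        rw [Finsupp.single_le_iff]
        simp
      · have hsupp : m.support.Nonempty := Finsupp.support_nonempty_iff.2 hm
        set i₀ := m.support.min' hsupp with hi₀
        have hmin : m.support.min = (i₀ : WithTop (Fin d)) := (Finset.coe_min' hsupp).symm
        have hi₀mem : i₀ ∈ m.support := Finset.min'_mem _ _
        have hi₀le : Finsupp.single i₀ 1 ≤ m := by
          rw [Finsupp.single_le_iff]
          exact Nat.one_le_iff_ne_zero.2 (Finsupp.mem_support_iff.1 hi₀mem)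
        have hrest : m - Finsupp.single i₀ 1 + Finsupp.single i₀ 1 = m :=
          tsub_add_cancel_of_le hi₀le
        rw [Finset.sum_eq_single i₀]
        · rw [hterm i₀, if_pos hi₀le, hcoeff, hrest, if_pos hmin]
        · intro i _ hne
          rw [hterm i]
          split
          · rename_i hle
            rw [hcoeff]
            have : m - Finsupp.single i 1 + Finsupp.single i 1 = m := tsub_add_cancel_of_le hle
            rw [this, hmin, if_neg]
            intro hcon
            exact hne (by exact_mod_cast hcon.symm)
          · rfl
        · intro h; exact absurd (Finset.mem_univ i₀) h
    rw [hsum]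
    apply Ideal.sum_mem
    intro i _
    rw [pow_succ']
    exact Ideal.mul_mem_mul (Ideal.subset_span ⟨i, rfl⟩) (ih (hgi i))

/-- finset of exponents of total degree `n` -/
noncomputable def degFinset (d n : ℕ) : Finset (Fin d →₀ ℕ) :=
  ((Fintype.piFinset fun _ : Fin d => Finset.range (n+1)).map
    (Finsupp.equivFunOnFinite.symm.toEmbedding)).filter (fun m => deg m = n)

lemma mem_degFinset {n : ℕ} {m : Fin d →₀ ℕ} : m ∈ degFinset d n ↔ deg m = n := by
  classical
  constructor
  · intro h
    exact (Finset.mem_filter.1 h).2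
  · intro h
    refine Finset.mem_filter.2 ⟨Finset.mem_map.2 ⟨fun i => m i, ?_, ?_⟩, h⟩
    · refine Fintype.mem_piFinset.2 fun i => Finset.mem_range.2 ?_
      have := le_deg m i
      omega
    · simpa [Equiv.coe_toEmbedding] using Finsupp.equivFunOnFinite_symm_coe m

/-- initial form of a power series in degree `n`, as a polynomial -/
noncomputable def initP (n : ℕ) (g : MvPowerSeries (Fin d) k) : MvPolynomial (Fin d) k :=
  ∑ m ∈ degFinset d n, MvPolynomial.monomial m (MvPowerSeries.coeff m g)

lemma coeff_initP (n : ℕ) (g : MvPowerSeries (Fin d) k) (m : Fin d →₀ ℕ) :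
    MvPolynomial.coeff m (initP n g) = if deg m = n then MvPowerSeries.coeff m g else 0 := by
  classical
  rw [initP, MvPolynomial.coeff_sum]
  simp_rw [MvPolynomial.coeff_monomial]
  rw [Finset.sum_ite_eq' (degFinset d n) m (fun m' => MvPowerSeries.coeff m' g)]
  exact if_congr mem_degFinset rfl rfl

lemma initP_mul {x y : MvPowerSeries (Fin d) k} {a b : ℕ}
    (hx : OrdGE x a) (hy : OrdGE y b) :
    initP (a + b) (x * y) = initP a x * initP b y := by
  classical
  apply MvPolynomial.ext
  intro m
  rw [coeff_initP, MvPolynomial.coeff_mul]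
  by_cases hm : deg m = a + b
  · rw [if_pos hm, MvPowerSeries.coeff_mul]
    apply Finset.sum_congr rfl
    rintro ⟨i, j⟩ hij
    rw [Finset.HasAntidiagonal.mem_antidiagonal] at hij
    have hdegs : deg i + deg j = a + b := by rw [← deg_add, hij, hm]
    rw [coeff_initP, coeff_initP]
    by_cases hi : deg i = a
    · have hj : deg j = b := by omega
      rw [if_pos hi, if_pos hj]
    · rw [if_neg hi]
      rcases lt_or_gt_of_ne hi with hlt | hgt
      · rw [hx i hlt, zero_mul, zero_mul]
      · have : deg j < b := by omega
        rw [hy j this, mul_zero, zero_mul]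
  · rw [if_neg hm]
    symm
    apply Finset.sum_eq_zero
    rintro ⟨i, j⟩ hij
    rw [Finset.HasAntidiagonal.mem_antidiagonal] at hij
    have hdegs : deg i + deg j = deg m := by rw [← deg_add, hij]
    rw [coeff_initP, coeff_initP]
    by_cases hi : deg i = a
    · by_cases hj : deg j = b
      · exact absurd (by omega : deg m = a + b) hm
      · rw [if_neg hj, mul_zero]
    · rw [if_neg hi, zero_mul]


open MvPolynomial in
lemma prime_X_mv (i : Fin d) : Prime (MvPolynomial.X i : MvPolynomial (Fin d) k) := by
  cases d with
  | zero => exact i.elim0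
  | succ n =>
    rw [← MulEquiv.prime_iff (MvPolynomial.renameEquiv k (Equiv.swap i 0)).toMulEquiv]
    have h1 : (MvPolynomial.renameEquiv k (Equiv.swap i 0)).toMulEquiv (X i) = (X 0 : MvPolynomial (Fin (n+1)) k) := by
      show (MvPolynomial.renameEquiv k (Equiv.swap i 0)) (X i) = _
      rw [MvPolynomial.renameEquiv_apply, MvPolynomial.rename_X, Equiv.swap_apply_left]
    rw [h1, ← MulEquiv.prime_iff (MvPolynomial.finSuccEquiv k n).toMulEquiv]
    have h2 : (MvPolynomial.finSuccEquiv k n).toMulEquiv (X 0) = Polynomial.X := by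
      show (MvPolynomial.finSuccEquiv k n) (X 0) = _
      exact MvPolynomial.finSuccEquiv_X_zero
    rw [h2]
    exact Polynomial.prime_X

lemma factor_prime_pow {α : Type} [CommRing α] [IsDomain α] {x G Q : α} (hx : Prime x)
    {n : ℕ} (h : G * Q = x ^ n) :
    ∃ a ≤ n, ∃ u v : αˣ, G = (u : α) * x ^ a ∧ Q = (v : α) * x ^ (n - a) := by
  have hG : G ∣ x ^ n := ⟨Q, h.symm⟩
  obtain ⟨a, ha, hass⟩ := (dvd_prime_pow hx n).1 hG
  obtain ⟨u, hu⟩ := hass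
  -- hu : G * u = x ^ a
  have hG' : G = (↑u⁻¹ : α) * x ^ a := by
    calc G = G * (↑u * (↑u⁻¹ : α)) := by rw [u.mul_inv, mul_one]
    _ = (G * ↑u) * (↑u⁻¹ : α) := by ring
    _ = x ^ a * (↑u⁻¹ : α) := by rw [hu]
    _ = (↑u⁻¹ : α) * x ^ a := mul_comm _ _
  have hxa : x ^ a ≠ 0 := pow_ne_zero _ hx.ne_zero
  have hQ : Q = (u : α) * x ^ (n - a) := by
    have hcan : x ^ a * ((↑u⁻¹ : α) * Q) = x ^ a * x ^ (n - a) := by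
      rw [← pow_add]
      have : a + (n - a) = n := by omega
      rw [this, ← h, hG']; ring
    have := mul_left_cancel₀ hxa hcan
    calc Q = (↑u * (↑u⁻¹ : α)) * Q := by rw [u.mul_inv, one_mul]
    _ = ↑u * ((↑u⁻¹ : α) * Q) := by ring
    _ = ↑u * x ^ (n - a) := by rw [this]
  exact ⟨a, ha, u⁻¹, u, hG', hQ⟩

lemma isUnit_constantCoeff_ne_zero {w : MvPolynomial (Fin d) k} (hw : IsUnit w) :
    MvPolynomial.constantCoeff w ≠ 0 := by
  obtain ⟨u, rfl⟩ := hw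
  have h := congrArg MvPolynomial.constantCoeff u.mul_inv
  rw [map_mul, map_one] at h
  exact left_ne_zero_of_mul (h ▸ one_ne_zero)

/-- homogeneous of degree one (in the weak sense of coefficient support) -/
def Hom1 (q : MvPolynomial (Fin d) k) : Prop :=
  ∀ m, MvPolynomial.coeff m q ≠ 0 → deg m = 1

lemma hom1_X (i : Fin d) : Hom1 (MvPolynomial.X i : MvPolynomial (Fin d) k) := by
  intro m hm
  classical
  rw [MvPolynomial.coeff_X'] at hm
  split at hm
  · rename_i h; rw [← h, deg_single]
  · exact absurd rfl hm

lemma hom1_CMul {q : MvPolynomial (Fin d) k} (a : k) (hq : Hom1 q) :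
    Hom1 (MvPolynomial.C a * q) := by
  intro m hm
  rw [MvPolynomial.coeff_C_mul] at hm
  exact hq m (right_ne_zero_of_mul hm)

lemma hom1_sum {s : Finset (Fin d)} {f : Fin d → MvPolynomial (Fin d) k}
    (hf : ∀ j ∈ s, Hom1 (f j)) : Hom1 (∑ j ∈ s, f j) := by
  intro m hm
  rw [MvPolynomial.coeff_sum] at hm
  obtain ⟨j, hj, hne⟩ := Finset.exists_ne_zero_of_sum_ne_zero hm
  exact hf j hj m hne

lemma hom1_sub {q r : MvPolynomial (Fin d) k} (hq : Hom1 q) (hr : Hom1 r) :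
    Hom1 (q - r) := by
  intro m hm
  rw [MvPolynomial.coeff_sub] at hm
  by_cases h1 : MvPolynomial.coeff m q = 0
  · rw [h1, zero_sub, neg_ne_zero] at hm
    exact hr m hm
  · exact hq m h1

lemma hom1_eq_lin {g : MvPolynomial (Fin d) k} (hg : Hom1 g) :
    g = ∑ j, MvPolynomial.C (MvPolynomial.coeff (Finsupp.single j 1) g) * MvPolynomial.X j := by
  classical
  apply MvPolynomial.ext
  intro m
  rw [MvPolynomial.coeff_sum]
  simp_rw [MvPolynomial.coeff_C_mul, MvPolynomial.coeff_X']
  by_cases hm : deg m = 1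
  · obtain ⟨i, rfl⟩ := deg_eq_one hm
    rw [Finset.sum_eq_single i]
    · rw [if_pos rfl, mul_one]
    · intro j _ hne
      rw [if_neg, mul_zero]
      intro hcon
      have h1 := congrArg (fun f : Fin d →₀ ℕ => f j) hcon
      simp only [Finsupp.single_apply, if_pos rfl] at h1
      rw [if_neg (Ne.symm hne)] at h1
      exact one_ne_zero h1
    · intro h; exact absurd (Finset.mem_univ i) h
  · have hz : ∀ j ∈ Finset.univ,
        (MvPolynomial.coeff (Finsupp.single j 1) g) *
          (if Finsupp.single j 1 = m then 1 else 0) = 0 := by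
      intro j _
      rw [if_neg, mul_zero]
      intro hcon
      rw [← hcon, deg_single] at hm
      exact hm rfl
    rw [Finset.sum_eq_zero hz]
    by_contra hne
    exact hm (hg m hne)

lemma endgame {g q : MvPolynomial (Fin d) k} {c : Fin d → k} {pp : ℕ} (hpp : 2 ≤ pp)
    (hg1 : Hom1 g) (hg0 : g ≠ 0)
    (heq : g * q = (∑ i, MvPolynomial.C (c i) * MvPolynomial.X i) ^ pp) :
    ∃ f : MvPolynomial (Fin d) k, Ideal.span {q} = Ideal.span {f ^ (pp - 1)} := by
  classical
  rcases eq_or_ne q 0 with rfl | hq0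
  · exact ⟨0, by rw [zero_pow (by omega : pp - 1 ≠ 0)]⟩
  set ℓ : MvPolynomial (Fin d) k := ∑ i, MvPolynomial.C (c i) * MvPolynomial.X i with hℓ
  have hℓ0 : ℓ ≠ 0 := by
    intro h
    rw [h, zero_pow (by omega : pp ≠ 0)] at heq
    exact (mul_ne_zero hg0 hq0) heq
  obtain ⟨i₀, hc0⟩ : ∃ i₀, c i₀ ≠ 0 := by
    by_contra hc
    push_neg at hc
    apply hℓ0
    rw [hℓ]
    apply Finset.sum_eq_zero
    intro i _
    rw [hc i, map_zero, zero_mul]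
  -- change of variables
  set S : MvPolynomial (Fin d) k :=
    ∑ t ∈ Finset.univ.erase i₀, MvPolynomial.C (c t) * MvPolynomial.X t with hS
  set F : Fin d → MvPolynomial (Fin d) k := fun j =>
    if j = i₀ then MvPolynomial.C (c i₀)⁻¹ * (MvPolynomial.X i₀ - S) else MvPolynomial.X j
    with hF
  set G : Fin d → MvPolynomial (Fin d) k := fun j =>
    if j = i₀ then MvPolynomial.C (c i₀) * MvPolynomial.X i₀ + S else MvPolynomial.X j
    with hG
  have hFi : F i₀ = MvPolynomial.C (c i₀)⁻¹ * (MvPolynomial.X i₀ - S) := by simp [hF]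
  have hGi : G i₀ = MvPolynomial.C (c i₀) * MvPolynomial.X i₀ + S := by simp [hG]
  have hFne : ∀ t, t ≠ i₀ → F t = MvPolynomial.X t := fun t ht => by simp [hF, ht]
  have hGne : ∀ t, t ≠ i₀ → G t = MvPolynomial.X t := fun t ht => by simp [hG, ht]
  have haevalS : ∀ (H : Fin d → MvPolynomial (Fin d) k), (∀ t, t ≠ i₀ → H t = MvPolynomial.X t) →
      MvPolynomial.aeval H S = S := by
    intro H hH
    rw [hS, map_sum]
    apply Finset.sum_congr rfl
    intro t ht
    rw [map_mul, MvPolynomial.aeval_C, MvPolynomial.aeval_X, MvPolynomial.algebraMap_eq,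
      hH t (Finset.mem_erase.1 ht).1]
  have hFS : MvPolynomial.aeval F S = S := haevalS F hFne
  have hGS : MvPolynomial.aeval G S = S := haevalS G hGne
  have hCC : MvPolynomial.C (c i₀) * MvPolynomial.C (c i₀)⁻¹ = (1 : MvPolynomial (Fin d) k) := by
    rw [← map_mul, mul_inv_cancel₀ hc0, map_one]
  have hcomp1 : (MvPolynomial.aeval F).comp (MvPolynomial.aeval (R := k) G) = AlgHom.id k _ := by
    apply MvPolynomial.algHom_ext
    intro j
    rw [AlgHom.comp_apply, MvPolynomial.aeval_X, AlgHom.id_apply]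
    rcases eq_or_ne j i₀ with rfl | hj
    · rw [hGi, map_add, map_mul, MvPolynomial.aeval_C, MvPolynomial.aeval_X,
        MvPolynomial.algebraMap_eq, hFS, hFi]
      rw [← mul_assoc, hCC, one_mul, sub_add_cancel]
    · rw [hGne j hj, MvPolynomial.aeval_X, hFne j hj]
  have hcomp2 : (MvPolynomial.aeval G).comp (MvPolynomial.aeval (R := k) F) = AlgHom.id k _ := by
    apply MvPolynomial.algHom_ext
    intro j
    rw [AlgHom.comp_apply, MvPolynomial.aeval_X, AlgHom.id_apply]
    rcases eq_or_ne j i₀ with rfl | hj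
    · rw [hFi, map_mul, MvPolynomial.aeval_C, MvPolynomial.algebraMap_eq, map_sub,
        MvPolynomial.aeval_X, hGS, hGi]
      rw [add_sub_cancel_right, ← mul_assoc, ← map_mul, inv_mul_cancel₀ hc0, map_one, one_mul]
    · rw [hFne j hj, MvPolynomial.aeval_X, hGne j hj]
  set τ : MvPolynomial (Fin d) k ≃ₐ[k] MvPolynomial (Fin d) k :=
    AlgEquiv.ofAlgHom (MvPolynomial.aeval F) (MvPolynomial.aeval G) hcomp1 hcomp2 with hτ
  have hτapp : ∀ x, τ x = MvPolynomial.aeval F x := fun x => rfl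
  have hτℓ : τ ℓ = MvPolynomial.X i₀ := by
    rw [hτapp, hℓ]
    rw [← Finset.add_sum_erase _ _ (Finset.mem_univ i₀), map_add, map_mul,
      MvPolynomial.aeval_C, MvPolynomial.aeval_X, MvPolynomial.algebraMap_eq, ← hS, hFS, hFi]
    rw [← mul_assoc, hCC, one_mul, sub_add_cancel]
  have heq2 : (τ g) * (τ q) = (MvPolynomial.X i₀) ^ pp := by
    rw [← map_mul, heq, map_pow, hτℓ]
  obtain ⟨a, hale, u, v, hug, hvq⟩ := factor_prime_pow (prime_X_mv i₀) heq2
  -- τ g is homogeneous of degree 1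
  have hτg1 : Hom1 (τ g) := by
    rw [hτapp, hom1_eq_lin hg1, map_sum]
    apply hom1_sum
    intro j _
    rw [map_mul, MvPolynomial.aeval_C, MvPolynomial.algebraMap_eq, MvPolynomial.aeval_X]
    apply hom1_CMul
    rcases eq_or_ne j i₀ with rfl | hj
    · rw [hFi]
      apply hom1_CMul
      apply hom1_sub (hom1_X j)
      rw [hS]
      apply hom1_sum
      intro t _
      exact hom1_CMul _ (hom1_X t)
    · rw [hFne j hj]
      exact hom1_X j
  have hτg0 : τ g ≠ 0 := fun h => hg0 (by simpa using τ.injective (h.trans (map_zero τ).symm))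
  -- a = 1
  have ha1 : a = 1 := by
    rcases Nat.lt_or_ge a 1 with h0 | h1
    · -- a = 0 : τ g is a unit, contradiction with constant coeff 0
      interval_cases a
      rw [pow_zero, mul_one] at hug
      have hunit : IsUnit (τ g) := hug ▸ u.isUnit
      have := isUnit_constantCoeff_ne_zero hunit
      apply absurd _ this
      rw [MvPolynomial.constantCoeff_eq]
      by_contra hne
      have := hτg1 0 hne
      simp at this
    · rcases Nat.lt_or_ge a 2 with h2 | h2
      · omega
      · -- a ≥ 2 impossible
        exfalso
        obtain ⟨m, hm⟩ := MvPolynomial.ne_zero_iff.1 hτg0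
        have hdeg : deg m = 1 := hτg1 m hm
        rw [hug] at hm
        rw [MvPolynomial.X_pow_eq_monomial, MvPolynomial.coeff_mul_monomial'] at hm
        split at hm
        · rename_i hle
          have := deg_mono hle
          rw [deg_single] at this
          omega
        · exact hm rfl
  subst ha1
  -- pull everything back
  rw [pow_one] at hug
  obtain ⟨U, hU⟩ : IsUnit (τ.symm (u : MvPolynomial (Fin d) k)) := u.isUnit.map τ.symm
  have hXval : τ.symm (MvPolynomial.X i₀) = (↑U⁻¹ : MvPolynomial (Fin d) k) * g := by
    have h1 := congrArg τ.symm hug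
    rw [AlgEquiv.symm_apply_apply, map_mul, ← hU] at h1
    calc τ.symm (MvPolynomial.X i₀)
        = ((↑U⁻¹ : MvPolynomial (Fin d) k) * ↑U) * τ.symm (MvPolynomial.X i₀) := by
          rw [U.inv_mul, one_mul]
      _ = (↑U⁻¹ : MvPolynomial (Fin d) k) * (↑U * τ.symm (MvPolynomial.X i₀)) := by ring
      _ = (↑U⁻¹ : MvPolynomial (Fin d) k) * g := by rw [← h1]
  have hqval : q = τ.symm ↑v * ((↑U⁻¹ : MvPolynomial (Fin d) k) * g) ^ (pp - 1) := by
    have h2 := congrArg τ.symm hvq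
    rw [AlgEquiv.symm_apply_apply, map_mul, map_pow, hXval] at h2
    exact h2
  have hunit : IsUnit (τ.symm (v : MvPolynomial (Fin d) k) *
      ((↑U⁻¹ : MvPolynomial (Fin d) k)) ^ (pp - 1)) :=
    (v.isUnit.map τ.symm).mul ((U⁻¹.isUnit).pow _)
  refine ⟨g, Ideal.span_singleton_eq_span_singleton.2 ?_⟩
  obtain ⟨w, hw⟩ := hunit
  refine Associated.symm ⟨w, ?_⟩
  rw [hw, hqval, mul_pow]
  ring


lemma annihilator_transfer
    (σ : MvPowerSeries (Fin d) k →+* MvPowerSeries (Fin d) k)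
    (hσ1 : ∀ (f : MvPowerSeries (Fin d) k) (n : (Fin d) →₀ ℕ),
      MvPowerSeries.coeff (p • n) (σ f) = (MvPowerSeries.coeff n f) ^ p)
    (hσ2 : ∀ (f : MvPowerSeries (Fin d) k) (m : (Fin d) →₀ ℕ),
      (∀ n : (Fin d) →₀ ℕ, m ≠ p • n) → MvPowerSeries.coeff m (σ f) = 0)
    (hp0 : 0 < p)
    {C : Type} [AddCommGroup C] [Module (MvPowerSeries (Fin d) k) C]
    {D : Type} [AddCommGroup D] [Module (MvPowerSeries (Fin d) k) D]
    (ι : C →ₛₗ[σ] D) (hD : IsSigmaBaseChange σ ι)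
    (N : MvPowerSeries (Fin d) k) (hND : ∀ x : D, N • x = 0)
    (e : Fin d →₀ ℕ) (he : ∀ i, e i < p) :
    ∀ c : C, pihat p e N • c = 0 := by
  intro c
  set jmap : C →ₛₗ[σ] TwistedTensor σ C :=
    { toFun := fun c => TwistedTensor.mk σ C 1 c
      map_add' := fun c₁ c₂ => TensorProduct.tmul_add _ c₁ c₂
      map_smul' := by
        intro r c
        show TwistedTensor.mk σ C 1 (r • c) = σ r • TwistedTensor.mk σ C 1 c
        rw [TwistedTensor.mk_smul, TwistedTensor.smul_mk]
        rfl } with hjmap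
  obtain ⟨gmap, hgmap, -⟩ := hD (TwistedTensor σ C) jmap
  have h1 : N • (jmap c) = 0 := by
    rw [← hgmap c, ← gmap.map_smul, hND (ι c), map_zero]
  have h0 : TwistedTensor.mk σ C (untwist σ N) c = 0 := by
    have h2 : N • (jmap c) = TwistedTensor.mk σ C (untwist σ N) c := by
      show N • TwistedTensor.mk σ C 1 c = _
      rw [TwistedTensor.smul_mk, mul_one]
    rw [← h2, h1]
  set B : Twisted σ →ₗ[MvPowerSeries (Fin d) k] C →ₗ[MvPowerSeries (Fin d) k] C :=
    LinearMap.mk₂ (MvPowerSeries (Fin d) k)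
    (fun a c => pihat p e (unTw σ a) • c)
    (fun a₁ a₂ c => by
      rw [unTw_add, pihat_add, add_smul])
    (fun r a c => by
      rw [unTw_smul, pihat_smul σ hσ1 hσ2 hp0 e he, mul_smul])
    (fun a c₁ c₂ => smul_add _ c₁ c₂)
    (fun r a c => smul_comm _ r c) with hB
  have h2 := congrArg (TwistedTensor.lower σ C B) h0
  rw [TwistedTensor.lower_zero, TwistedTensor.lower_mk] at h2
  exact h2

end Series

end St1


open St1

/-- `k` perfect of characteristic `p`, `S̄ = k[[T₁,…,T_d]]`,
`σ` the Frobenius with `σ(Tᵢ) = Tᵢᵖ`.  Let `h̄` have order exactly `p−1` and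
suppose its initial form in `k[T₁,…,T_d]` does not generate an ideal which is a
`(p−1)`-th power.  If `C` is an `S̄`-module annihilated by some nonzero `f`,
with an `S̄`-linear map `φ : C → C^{(σ)}` whose cokernel is annihilated by
`h̄`, then `C = 0`. -/
theorem statement1 (p : ℕ) (hp : p.Prime) (k : Type) [Field k] [CharP k p] [ExpChar k p]
    [PerfectRing k p] (d : ℕ)
    (σ : MvPowerSeries (Fin d) k →+* MvPowerSeries (Fin d) k)
    (hσ1 : ∀ (f : MvPowerSeries (Fin d) k) (n : (Fin d) →₀ ℕ),
      MvPowerSeries.coeff (p • n) (σ f) = (MvPowerSeries.coeff n f) ^ p)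
    (hσ2 : ∀ (f : MvPowerSeries (Fin d) k) (m : (Fin d) →₀ ℕ),
      (∀ n : (Fin d) →₀ ℕ, m ≠ p • n) → MvPowerSeries.coeff m (σ f) = 0)
    (hbar : MvPowerSeries (Fin d) k)
    (hord1 : hbar ∈ (Ideal.span (Set.range (MvPowerSeries.X : Fin d → MvPowerSeries (Fin d) k))) ^ (p - 1))
    (hord2 : hbar ∉ (Ideal.span (Set.range (MvPowerSeries.X : Fin d → MvPowerSeries (Fin d) k))) ^ p)
    -- the initial form of `hbar` (the degree-`(p-1)` homogeneous component, viewed in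
    -- `k[T₁,…,T_d] = gr S̄`) does not generate an ideal which is a `(p−1)`-th power:
    (hinit : ∀ q : MvPolynomial (Fin d) k,
      (∀ n : (Fin d) →₀ ℕ, MvPolynomial.coeff n q =
        if (n.sum fun _ m => m) = p - 1 then MvPowerSeries.coeff n hbar else 0) →
      ¬ ∃ f : MvPolynomial (Fin d) k, Ideal.span {q} = Ideal.span {f ^ (p - 1)})
    (C : Type) [AddCommGroup C] [Module (MvPowerSeries (Fin d) k) C]
    (f : MvPowerSeries (Fin d) k) (hf : f ≠ 0) (hfC : ∀ c : C, f • c = 0)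
    (D : Type) [AddCommGroup D] [Module (MvPowerSeries (Fin d) k) D]
    (ι : C →ₛₗ[σ] D) (hD : IsSigmaBaseChange σ ι)
    (φ : C →ₗ[MvPowerSeries (Fin d) k] D)
    (hcoker : ∀ x : D, ∃ c : C, hbar • x = φ c) :
    Subsingleton C := by
  classical
  have hp2 : 2 ≤ p := hp.two_le
  have hp0 : 0 < p := by omega
  suffices hzero : ∀ c : C, c = 0 by
    exact subsingleton_of_forall_eq 0 fun c => hzero c
  -- minimal order of an annihilator of C
  have hex : ∃ n : ℕ, ∃ g : MvPowerSeries (Fin d) k,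
      (∀ c : C, g • c = 0) ∧ ∃ m, deg m = n ∧ MvPowerSeries.coeff m g ≠ 0 := by
    obtain ⟨m, hm⟩ : ∃ m, MvPowerSeries.coeff m f ≠ 0 := by
      by_contra hc
      push_neg at hc
      exact hf (MvPowerSeries.ext fun n => by rw [hc n, map_zero])
    exact ⟨deg m, f, hfC, m, rfl, hm⟩
  set u := Nat.find hex with hu
  obtain ⟨f₀, hf₀C, m₀, hm₀deg, hm₀⟩ := Nat.find_spec hex
  have humin : ∀ g : MvPowerSeries (Fin d) k, (∀ c : C, g • c = 0) →
      ∀ m, MvPowerSeries.coeff m g ≠ 0 → u ≤ deg m := by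
    intro g hg m hm
    exact Nat.find_min' hex ⟨g, hg, m, rfl, hm⟩
  have hOrd : ∀ g : MvPowerSeries (Fin d) k, (∀ c : C, g • c = 0) → OrdGE g u := by
    intro g hg m hm
    by_contra hne
    exact absurd (humin g hg m hne) (by omega)
  -- the product series
  set N : MvPowerSeries (Fin d) k := f₀ * hbar with hN
  have hND : ∀ x : D, N • x = 0 := by
    intro x
    obtain ⟨c, hc⟩ := hcoker x
    rw [hN, mul_smul, hc, ← map_smul, hf₀C, map_zero]
  have hkey : ∀ (e : Fin d →₀ ℕ), (∀ i, e i < p) → ∀ c : C, pihat p e N • c = 0 :=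
    annihilator_transfer σ hσ1 hσ2 hp0 ι hD N hND
  have hcoeffN : ∀ m : Fin d →₀ ℕ,
      MvPowerSeries.coeff m N =
        (MvPowerSeries.coeff (qd p m) (pihat p (rd p m) N)) ^ p := by
    intro m
    rw [coeff_pihat, qd_rd m]
    exact (RingEquiv.apply_symm_apply (frobeniusEquiv k p) _).symm
  -- the order of hbar is exactly p - 1
  have hOrdHbar : OrdGE hbar (p - 1) := span_X_pow_le (p - 1) hord1
  obtain ⟨m₁, hm₁deg, hm₁⟩ : ∃ m₁, deg m₁ = p - 1 ∧ MvPowerSeries.coeff m₁ hbar ≠ 0 := by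
    by_contra hc
    push_neg at hc
    apply hord2
    apply mem_span_X_pow
    intro m hm
    rcases lt_trichotomy (deg m) (p - 1) with h | h | h
    · exact hOrdHbar m h
    · exact hc m h
    · omega
  have hordf₀ : OrdGE f₀ u := hOrd f₀ hf₀C
  have hOrdN : OrdGE N (u + (p - 1)) := ordGE_mul hordf₀ hOrdHbar
  have hIN : initP (u + (p - 1)) N = initP u f₀ * initP (p - 1) hbar :=
    initP_mul hordf₀ hOrdHbar
  have hne1 : initP u f₀ ≠ 0 := by
    apply MvPolynomial.ne_zero_iff.2 ⟨m₀, _⟩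
    rw [coeff_initP, if_pos hm₀deg]
    exact hm₀
  have hne2 : initP (p - 1) hbar ≠ 0 := by
    apply MvPolynomial.ne_zero_iff.2 ⟨m₁, _⟩
    rw [coeff_initP, if_pos hm₁deg]
    exact hm₁
  obtain ⟨mh, hmh⟩ := MvPolynomial.ne_zero_iff.1 (mul_ne_zero hne1 hne2)
  rw [← hIN, coeff_initP] at hmh
  have hdegmh : deg mh = u + (p - 1) := by
    by_contra h
    rw [if_neg h] at hmh
    exact hmh rfl
  rw [if_pos hdegmh] at hmh
  -- u ≤ 1
  have hule : u ≤ 1 := by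
    have hbann := hkey (rd p mh) (rd_lt hp0 mh)
    have hcoefmh := hcoeffN mh
    have hqne : MvPowerSeries.coeff (qd p mh) (pihat p (rd p mh) N) ≠ 0 := by
      intro h
      rw [h, zero_pow (by omega : p ≠ 0)] at hcoefmh
      exact hmh hcoefmh
    have hge : u ≤ deg (qd p mh) := humin _ hbann _ hqne
    have h3 := congrArg deg (qd_rd (p := p) mh)
    rw [deg_add, deg_smul] at h3
    have hkey2 : p * u ≤ u + (p - 1) := by
      calc p * u ≤ p * deg (qd p mh) := Nat.mul_le_mul_left p hge
      _ ≤ deg mh := by omega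
      _ = u + (p - 1) := hdegmh
    by_contra hgt
    push_neg at hgt
    have e1 : p * 2 ≤ p * u := Nat.mul_le_mul_left p (by omega)
    have e2 : 2 * u ≤ p * u := Nat.mul_le_mul_right u hp2
    generalize hA : p * u = A at hkey2 e1 e2
    omega
  rcases Nat.le_one_iff_eq_zero_or_eq_one.1 hule with hu0 | hu1
  · -- u = 0 : C is annihilated by a unit
    have hm₀0 : m₀ = 0 := (deg_eq_zero_iff m₀).1 (by rw [hm₀deg, ← hu, hu0])
    have hunit : IsUnit f₀ := by
      rw [MvPowerSeries.isUnit_iff_constantCoeff, isUnit_iff_ne_zero]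
      intro hc
      apply hm₀
      rw [hm₀0, ← hc]
      rfl
    obtain ⟨W, hW⟩ := hunit
    intro c
    calc c = (1 : MvPowerSeries (Fin d) k) • c := (one_smul _ c).symm
    _ = ((↑W⁻¹ * ↑W : MvPowerSeries (Fin d) k)) • c := by rw [W.inv_mul]
    _ = (↑W⁻¹ : MvPowerSeries (Fin d) k) • (f₀ • c) := by rw [mul_smul, hW]
    _ = 0 := by rw [hf₀C c, smul_zero]
  · -- u = 1 : contradiction with hinit
    exfalso
    set ci : Fin d → k := fun i =>
      MvPowerSeries.coeff (Finsupp.single i 1) (pihat p 0 N) with hci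
    have hNsingle : ∀ i : Fin d,
        MvPowerSeries.coeff (Finsupp.single i p) N = (ci i) ^ p := by
      intro i
      have h4 := hcoeffN (Finsupp.single i p)
      have hrd : rd p (Finsupp.single i p) = 0 := by
        ext j
        rw [rd_apply]
        rcases eq_or_ne i j with rfl | hij
        · simp [Finsupp.single_apply, Nat.mod_self]
        · simp [Finsupp.single_apply, hij]
      have hqd : qd p (Finsupp.single i p) = Finsupp.single i 1 := by
        ext j
        rw [qd_apply]
        rcases eq_or_ne i j with rfl | hij
        · simp [Finsupp.single_apply, Nat.div_self hp0]
        · simp [Finsupp.single_apply, hij]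
      rw [hrd, hqd] at h4
      exact h4
    have hNzero : ∀ m, deg m = p → (¬ ∃ i, m = Finsupp.single i p) →
        MvPowerSeries.coeff m N = 0 := by
      intro m hm hnot
      rw [hcoeffN m]
      rcases eq_or_ne (qd p m) 0 with hq0 | hq0
      · rw [hq0]
        have hz : MvPowerSeries.coeff 0 (pihat p (rd p m) N) = 0 := by
          by_contra hne
          have hz2 := humin _ (hkey (rd p m) (rd_lt hp0 m)) _ hne
          rw [hu1] at hz2
          simp at hz2
        rw [hz, zero_pow (by omega : p ≠ 0)]
      · exfalso
        have hd1 : 1 ≤ deg (qd p m) := by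
          by_contra hc
          push_neg at hc
          exact hq0 ((deg_eq_zero_iff _).1 (by omega))
        have h3 := congrArg deg (qd_rd (p := p) m)
        rw [deg_add, deg_smul, hm] at h3
        have hdq : deg (qd p m) = 1 := by
          rcases Nat.lt_or_ge (deg (qd p m)) 2 with h | h
          · omega
          · exfalso
            have e1 : p * 2 ≤ p * deg (qd p m) := Nat.mul_le_mul_left p h
            generalize hA : p * deg (qd p m) = A at h3 e1
            omega
        have hrd0 : deg (rd p m) = 0 := by
          rw [hdq, mul_one] at h3
          omega
        obtain ⟨i, hi⟩ := deg_eq_one hdq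
        apply hnot
        refine ⟨i, ?_⟩
        have hr0 : rd p m = 0 := (deg_eq_zero_iff _).1 hrd0
        have h5 := qd_rd (p := p) m
        rw [hr0, add_zero, hi] at h5
        rw [← h5, Finsupp.smul_single, smul_eq_mul, mul_one]
    haveI hexp : ExpChar (MvPolynomial (Fin d) k) p := ExpChar.prime hp
    have hℓpow : (∑ i, MvPolynomial.C (ci i) * MvPolynomial.X i) ^ p
        = ∑ i, MvPolynomial.monomial (Finsupp.single i p) ((ci i) ^ p) := by
      rw [sum_pow_char]
      apply Finset.sum_congr rfl
      intro i _
      rw [mul_pow, ← map_pow, MvPolynomial.X_pow_eq_monomial,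
        MvPolynomial.C_mul_monomial, mul_one]
    have hinitp : initP p N
        = ∑ i, MvPolynomial.monomial (Finsupp.single i p) ((ci i) ^ p) := by
      apply MvPolynomial.ext
      intro m
      rw [coeff_initP, MvPolynomial.coeff_sum]
      simp_rw [MvPolynomial.coeff_monomial]
      by_cases hm : deg m = p
      · rw [if_pos hm]
        by_cases hsingle : ∃ i, m = Finsupp.single i p
        · obtain ⟨i, rfl⟩ := hsingle
          rw [Finset.sum_eq_single i]
          · rw [if_pos rfl, hNsingle i]
          · intro j _ hji
            rw [if_neg]
            intro hcon
            have hj := congrArg (fun ff : Fin d →₀ ℕ => ff j) hcon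
            rcases eq_or_ne i j with hij | hij
            · exact hji hij.symm
            · have hp' : p = 0 := by simpa [Finsupp.single_apply, hij] using hj
              omega
          · intro h
            exact absurd (Finset.mem_univ i) h
        · rw [hNzero m hm hsingle]
          symm
          apply Finset.sum_eq_zero
          intro i _
          rw [if_neg]
          intro hcon
          exact hsingle ⟨i, hcon.symm⟩
      · rw [if_neg hm]
        symm
        apply Finset.sum_eq_zero
        intro i _
        rw [if_neg]
        intro hcon
        rw [← hcon, deg_single] at hm
        exact hm rfl
    have hordf₀' : OrdGE f₀ 1 := by rw [← hu1]; exact hordf₀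
    have h6 : 1 + (p - 1) = p := by omega
    have hIN' : initP p N = initP 1 f₀ * initP (p - 1) hbar := by
      have h7 := initP_mul hordf₀' hOrdHbar
      rw [h6] at h7
      exact h7
    have heqfinal : initP 1 f₀ * initP (p - 1) hbar
        = (∑ i, MvPolynomial.C (ci i) * MvPolynomial.X i) ^ p := by
      rw [← hIN', hinitp, hℓpow]
    have hHom1 : Hom1 (initP 1 f₀) := by
      intro m hm
      rw [coeff_initP] at hm
      by_cases h : deg m = 1
      · exact h
      · rw [if_neg h] at hm
        exact absurd rfl hm
    have hne0 : initP 1 f₀ ≠ 0 := by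
      rw [← hu1]
      exact hne1
    obtain ⟨ff, hff⟩ := endgame hp2 hHom1 hne0 heqfinal
    apply hinit (initP (p - 1) hbar) _ ⟨ff, hff⟩
    intro n
    rw [coeff_initP, deg_sum_eq]
end

section
/- Let k be a field of characteristic p (prime) and S̄ = k[[T₁,T₂]] with r̄ = (T₁,T₂). Suppose h̄ ∈ (T₁ᵖ, T₂ᵖ, T₁^{p−1}T₂^{p−1}) ⊂ S̄. Then there exists a nonzero S̄-module C of finite length together with an S̄-linear map φ: C → C^{(σ)} whose cokernel is annihilated by h̄; explicitly, C = k = S̄/(T₁,T₂), C^{(σ)} = S̄/(T₁ᵖ,T₂ᵖ), and φ(1) = T₁^{p−1}T₂^{p−1} mod (T₁ᵖ,T₂ᵖ) works. -/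
lemma sigmaX (p : ℕ) (hp : p.Prime) (k : Type) [Field k]
    (σ : MvPowerSeries (Fin 2) k →+* MvPowerSeries (Fin 2) k)
    (hσ1 : ∀ (f : MvPowerSeries (Fin 2) k) (n : (Fin 2) →₀ ℕ),
      MvPowerSeries.coeff (p • n) (σ f) = (MvPowerSeries.coeff n f) ^ p)
    (hσ2 : ∀ (f : MvPowerSeries (Fin 2) k) (m : (Fin 2) →₀ ℕ),
      (∀ n : (Fin 2) →₀ ℕ, m ≠ p • n) → MvPowerSeries.coeff m (σ f) = 0)
    (i : Fin 2) : σ (MvPowerSeries.X i) = MvPowerSeries.X i ^ p := by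
  classical
  have hsingle : (Finsupp.single i p : Fin 2 →₀ ℕ) = p • Finsupp.single i 1 := by
    rw [Finsupp.smul_single, smul_eq_mul, mul_one]
  have hcanc : ∀ n n' : Fin 2 →₀ ℕ, p • n = p • n' → n = n' := by
    intro n n' h
    ext a
    have := DFunLike.congr_fun h a
    simp only [Finsupp.smul_apply, smul_eq_mul] at this
    exact Nat.eq_of_mul_eq_mul_left hp.pos this
  ext m
  rw [MvPowerSeries.coeff_X_pow]
  by_cases h : ∃ n, m = p • n
  · obtain ⟨n, rfl⟩ := h
    rw [hσ1, MvPowerSeries.coeff_X]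
    by_cases hn : n = Finsupp.single i 1
    · subst hn
      rw [if_pos rfl, if_pos hsingle.symm, one_pow]
    · rw [if_neg hn, if_neg, zero_pow hp.ne_zero]
      intro hc
      exact hn (hcanc _ _ (hc.trans hsingle))
  · push_neg at h
    rw [hσ2 _ _ h, if_neg]
    intro hc
    exact h (Finsupp.single i 1) (hc.trans hsingle)

lemma kerle (k : Type) [Field k] :
    RingHom.ker (MvPowerSeries.constantCoeff : MvPowerSeries (Fin 2) k →+* k) ≤
      Ideal.span {(MvPowerSeries.X 0 : MvPowerSeries (Fin 2) k), MvPowerSeries.X 1} := by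
  classical
  intro f hf
  have hf0 : f 0 = 0 := hf
  set g : MvPowerSeries (Fin 2) k :=
    fun m => f (m + Finsupp.single 0 1) with hg
  set h2 : MvPowerSeries (Fin 2) k :=
    fun m => if m 0 = 0 then f (m + Finsupp.single 1 1) else 0 with hh2
  have key : f = MvPowerSeries.X 0 * g + MvPowerSeries.X 1 * h2 := by
    ext m
    rw [map_add, MvPowerSeries.X_def, MvPowerSeries.X_def,
      MvPowerSeries.coeff_monomial_mul, MvPowerSeries.coeff_monomial_mul]
    simp only [MvPowerSeries.coeff_apply, one_mul]; simp only [hg, hh2]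
    have e1 : (Finsupp.single (0 : Fin 2) 1 ≤ m) ↔ 1 ≤ m 0 := Finsupp.single_le_iff
    have e2 : (Finsupp.single (1 : Fin 2) 1 ≤ m) ↔ 1 ≤ m 1 := Finsupp.single_le_iff
    by_cases h0 : m 0 = 0
    · by_cases h1 : m 1 = 0
      · have hm : m = 0 := by
          ext a
          fin_cases a
          · exact h0
          · exact h1
        rw [if_neg (by rw [e1]; omega), if_neg (by rw [e2]; omega), hm, hf0]
        ring
      · have hle : Finsupp.single (1 : Fin 2) 1 ≤ m := e2.mpr (by omega)
        have hsub : ((m - Finsupp.single (1 : Fin 2) 1 : Fin 2 →₀ ℕ)) 0 = 0 := by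
          rw [Finsupp.tsub_apply, Finsupp.single_apply]
          simp [h0]
        rw [if_neg (by rw [e1]; omega), if_pos hle, if_pos hsub,
          tsub_add_cancel_of_le hle]
        ring
    · have hle : Finsupp.single (0 : Fin 2) 1 ≤ m := e1.mpr (by omega)
      rw [if_pos hle, tsub_add_cancel_of_le hle]
      by_cases hle2 : Finsupp.single (1 : Fin 2) 1 ≤ m
      · have hsub : ((m - Finsupp.single (1 : Fin 2) 1 : Fin 2 →₀ ℕ)) 0 = m 0 := by
          rw [Finsupp.tsub_apply, Finsupp.single_apply]
          simp
        rw [if_pos hle2, hsub, if_neg h0]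
        ring
      · rw [if_neg hle2]; ring
  rw [key]
  exact add_mem
    (Ideal.mul_mem_right _ _ (Ideal.subset_span (Set.mem_insert _ _)))
    (Ideal.mul_mem_right _ _ (Ideal.subset_span (Set.mem_insert_of_mem _ rfl)))

set_option maxHeartbeats 2000000 in
/-- Let `k` be a field of characteristic `p` and
`S̄ = k[[T₁,T₂]]`.  Suppose `h̄ ∈ (T₁ᵖ, T₂ᵖ, T₁^{p−1}T₂^{p−1})`.  Then there is a
nonzero finite-length `S̄`-module `C` with an `S̄`-linear map
`φ : C → C^{(σ)}` whose cokernel is annihilated by `h̄`; explicitly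
`C = S̄/(T₁,T₂) = k`, `C^{(σ)} = S̄/(T₁ᵖ,T₂ᵖ)` and
`φ(1) = T₁^{p−1}T₂^{p−1} mod (T₁ᵖ,T₂ᵖ)` works. -/
theorem statement2 (p : ℕ) (hp : p.Prime) (k : Type) [Field k] [CharP k p]
    (σ : MvPowerSeries (Fin 2) k →+* MvPowerSeries (Fin 2) k)
    (hσ1 : ∀ (f : MvPowerSeries (Fin 2) k) (n : (Fin 2) →₀ ℕ),
      MvPowerSeries.coeff (p • n) (σ f) = (MvPowerSeries.coeff n f) ^ p)
    (hσ2 : ∀ (f : MvPowerSeries (Fin 2) k) (m : (Fin 2) →₀ ℕ),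
      (∀ n : (Fin 2) →₀ ℕ, m ≠ p • n) → MvPowerSeries.coeff m (σ f) = 0)
    (hbar : MvPowerSeries (Fin 2) k)
    (hmem : hbar ∈ Ideal.span {(MvPowerSeries.X 0 : MvPowerSeries (Fin 2) k) ^ p,
      MvPowerSeries.X 1 ^ p, MvPowerSeries.X 0 ^ (p - 1) * MvPowerSeries.X 1 ^ (p - 1)}) :
    ∃ (ι : (MvPowerSeries (Fin 2) k ⧸
            Ideal.span {(MvPowerSeries.X 0 : MvPowerSeries (Fin 2) k), MvPowerSeries.X 1}) →ₛₗ[σ]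
          (MvPowerSeries (Fin 2) k ⧸
            Ideal.span {(MvPowerSeries.X 0 : MvPowerSeries (Fin 2) k) ^ p, MvPowerSeries.X 1 ^ p}))
      (φ : (MvPowerSeries (Fin 2) k ⧸
            Ideal.span {(MvPowerSeries.X 0 : MvPowerSeries (Fin 2) k), MvPowerSeries.X 1}) →ₗ[MvPowerSeries (Fin 2) k]
          (MvPowerSeries (Fin 2) k ⧸
            Ideal.span {(MvPowerSeries.X 0 : MvPowerSeries (Fin 2) k) ^ p, MvPowerSeries.X 1 ^ p})),
      IsSigmaBaseChange σ ι ∧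
      Nontrivial (MvPowerSeries (Fin 2) k ⧸
        Ideal.span {(MvPowerSeries.X 0 : MvPowerSeries (Fin 2) k), MvPowerSeries.X 1}) ∧
      IsFiniteLength (MvPowerSeries (Fin 2) k)
        (MvPowerSeries (Fin 2) k ⧸
          Ideal.span {(MvPowerSeries.X 0 : MvPowerSeries (Fin 2) k), MvPowerSeries.X 1}) ∧
      -- the cokernel of `φ` is annihilated by `h̄`
      (∀ x : (MvPowerSeries (Fin 2) k ⧸
          Ideal.span {(MvPowerSeries.X 0 : MvPowerSeries (Fin 2) k) ^ p, MvPowerSeries.X 1 ^ p}),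
        ∃ c, hbar • x = φ c) ∧
      -- explicitly, `φ(1) = T₁^{p−1}T₂^{p−1}`
      φ (Ideal.Quotient.mk _ 1) =
        Ideal.Quotient.mk _ (MvPowerSeries.X 0 ^ (p - 1) * MvPowerSeries.X 1 ^ (p - 1)) := by
  classical
  have hσX : ∀ i : Fin 2, σ (MvPowerSeries.X i) = MvPowerSeries.X i ^ p :=
    sigmaX p hp k σ hσ1 hσ2
  set I : Ideal (MvPowerSeries (Fin 2) k) :=
    Ideal.span {MvPowerSeries.X 0, MvPowerSeries.X 1} with hIdef
  set J : Ideal (MvPowerSeries (Fin 2) k) :=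
    Ideal.span {MvPowerSeries.X 0 ^ p, MvPowerSeries.X 1 ^ p} with hJdef
  set h0 : MvPowerSeries (Fin 2) k :=
    MvPowerSeries.X 0 ^ (p - 1) * MvPowerSeries.X 1 ^ (p - 1) with hh0
  have hX0J : (MvPowerSeries.X 0 : MvPowerSeries (Fin 2) k) ^ p ∈ J := by
    rw [hJdef]; exact Ideal.subset_span (Set.mem_insert _ _)
  have hX1J : (MvPowerSeries.X 1 : MvPowerSeries (Fin 2) k) ^ p ∈ J := by
    rw [hJdef]; exact Ideal.subset_span (Set.mem_insert_of_mem _ rfl)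
  have hXI : ∀ i : Fin 2, (MvPowerSeries.X i : MvPowerSeries (Fin 2) k) ∈ I := by
    intro i
    rw [hIdef]
    fin_cases i
    · exact Ideal.subset_span (Set.mem_insert _ _)
    · exact Ideal.subset_span (Set.mem_insert_of_mem _ rfl)
  -- σ maps I into J
  have hσIJ : ∀ a ∈ I, ((Ideal.Quotient.mk J).comp σ) a = 0 := by
    have hle : I ≤ Ideal.comap σ J := by
      rw [hIdef, Ideal.span_le]
      intro x hx
      simp only [Set.mem_insert_iff, Set.mem_singleton_iff] at hx
      rcases hx with rfl | rfl
      · rw [SetLike.mem_coe, Ideal.mem_comap, hσX 0]; exact hX0J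
      · rw [SetLike.mem_coe, Ideal.mem_comap, hσX 1]; exact hX1J
    intro a ha
    rw [RingHom.comp_apply, Ideal.Quotient.eq_zero_iff_mem]
    exact hle ha
  -- the semilinear map ι
  let ι' : (MvPowerSeries (Fin 2) k ⧸ I) →ₛₗ[σ] (MvPowerSeries (Fin 2) k ⧸ J) :=
    { toFun := Ideal.Quotient.lift I ((Ideal.Quotient.mk J).comp σ) hσIJ
      map_add' := fun x y =>
        map_add (Ideal.Quotient.lift I ((Ideal.Quotient.mk J).comp σ) hσIJ) x y
      map_smul' := by
        intro r x
        obtain ⟨a, rfl⟩ := Ideal.Quotient.mk_surjective x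
        show Ideal.Quotient.lift I _ hσIJ (Ideal.Quotient.mk I (r * a)) =
          σ r • Ideal.Quotient.lift I _ hσIJ (Ideal.Quotient.mk I a)
        rw [Ideal.Quotient.lift_mk, Ideal.Quotient.lift_mk, RingHom.comp_apply,
          RingHom.comp_apply, map_mul]
        rfl }
  have hι_mk : ∀ s : MvPowerSeries (Fin 2) k,
      ι' (Ideal.Quotient.mk I s) = Ideal.Quotient.mk J (σ s) := by
    intro s
    show Ideal.Quotient.lift I _ hσIJ (Ideal.Quotient.mk I s) = _
    rw [Ideal.Quotient.lift_mk, RingHom.comp_apply]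
  -- the linear map φ : multiplication by h0
  have hX0h0 : (MvPowerSeries.X 0 : MvPowerSeries (Fin 2) k) * h0 ∈ J := by
    have : (MvPowerSeries.X 0 : MvPowerSeries (Fin 2) k) * h0
        = MvPowerSeries.X 0 ^ p * MvPowerSeries.X 1 ^ (p - 1) := by
      rw [hh0, ← mul_assoc, ← pow_succ', Nat.sub_add_cancel hp.one_le]
    rw [this]
    exact Ideal.mul_mem_right _ _ hX0J
  have hX1h0 : (MvPowerSeries.X 1 : MvPowerSeries (Fin 2) k) * h0 ∈ J := by
    have : (MvPowerSeries.X 1 : MvPowerSeries (Fin 2) k) * h0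
        = MvPowerSeries.X 0 ^ (p - 1) * MvPowerSeries.X 1 ^ p := by
      rw [hh0, mul_left_comm, ← pow_succ', Nat.sub_add_cancel hp.one_le]
    rw [this]
    exact Ideal.mul_mem_left _ _ hX1J
  have hφker : I ≤ LinearMap.ker (LinearMap.toSpanSingleton (MvPowerSeries (Fin 2) k)
      (MvPowerSeries (Fin 2) k ⧸ J) (Ideal.Quotient.mk J h0)) := by
    rw [hIdef, Ideal.span_le]
    intro x hx
    simp only [Set.mem_insert_iff, Set.mem_singleton_iff] at hx
    have hx' : x * h0 ∈ J := by rcases hx with rfl | rfl; exacts [hX0h0, hX1h0]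
    rw [SetLike.mem_coe, LinearMap.mem_ker, LinearMap.toSpanSingleton_apply]
    show Ideal.Quotient.mk J (x * h0) = 0
    rw [Ideal.Quotient.eq_zero_iff_mem]
    exact hx'
  let φ' : (MvPowerSeries (Fin 2) k ⧸ I) →ₗ[MvPowerSeries (Fin 2) k]
      (MvPowerSeries (Fin 2) k ⧸ J) :=
    Submodule.liftQ I (LinearMap.toSpanSingleton (MvPowerSeries (Fin 2) k)
      (MvPowerSeries (Fin 2) k ⧸ J) (Ideal.Quotient.mk J h0)) hφker
  have hφ_mk : ∀ s : MvPowerSeries (Fin 2) k,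
      φ' (Ideal.Quotient.mk I s) = Ideal.Quotient.mk J (s * h0) := by
    intro s
    show Submodule.liftQ I _ hφker (Submodule.Quotient.mk s) = _
    rw [Submodule.liftQ_apply, LinearMap.toSpanSingleton_apply]
    rfl
  -- maximality of I
  have hIker : I = RingHom.ker (MvPowerSeries.constantCoeff : MvPowerSeries (Fin 2) k →+* k) := by
    apply le_antisymm
    · rw [hIdef, Ideal.span_le]
      intro x hx
      simp only [Set.mem_insert_iff, Set.mem_singleton_iff] at hx
      rcases hx with rfl | rfl <;>
        simp [RingHom.mem_ker, MvPowerSeries.constantCoeff_X]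
    · exact kerle k
  have hImax : I.IsMaximal := by
    rw [hIker]
    exact RingHom.ker_isMaximal_of_surjective _
      (fun a => ⟨MvPowerSeries.C a, MvPowerSeries.constantCoeff_C _⟩)
  haveI hsimple : IsSimpleModule (MvPowerSeries (Fin 2) k) (MvPowerSeries (Fin 2) k ⧸ I) :=
    isSimpleModule_iff_isCoatom.mpr (Ideal.isMaximal_def.mp hImax)
  have hnontriv : Nontrivial (MvPowerSeries (Fin 2) k ⧸ I) :=
    Ideal.Quotient.nontrivial_iff.mpr hImax.ne_top
  haveI : IsSimpleModule (MvPowerSeries (Fin 2) k)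
      ((MvPowerSeries (Fin 2) k ⧸ I) ⧸ (⊥ : Submodule (MvPowerSeries (Fin 2) k)
        (MvPowerSeries (Fin 2) k ⧸ I))) :=
    IsSimpleModule.congr (Submodule.quotEquivOfEqBot ⊥ rfl)
  have hfl : IsFiniteLength (MvPowerSeries (Fin 2) k) (MvPowerSeries (Fin 2) k ⧸ I) :=
    IsFiniteLength.of_simple_quotient (N := (⊥ : Submodule (MvPowerSeries (Fin 2) k)
      (MvPowerSeries (Fin 2) k ⧸ I))) IsFiniteLength.of_subsingleton
  refine ⟨ι', φ', ?_, hnontriv, hfl, ?_, ?_⟩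
  · -- base change property
    intro E _ _ j
    set e := j (Ideal.Quotient.mk I 1) with he
    have key : ∀ i : Fin 2, (MvPowerSeries.X i ^ p : MvPowerSeries (Fin 2) k) • e = 0 := by
      intro i
      have hXsmul : (MvPowerSeries.X i : MvPowerSeries (Fin 2) k) •
          (Ideal.Quotient.mk I 1) = 0 := by
        show Ideal.Quotient.mk I (MvPowerSeries.X i * 1) = 0
        rw [mul_one, Ideal.Quotient.eq_zero_iff_mem]
        exact hXI i
      calc (MvPowerSeries.X i ^ p : MvPowerSeries (Fin 2) k) • e
          = σ (MvPowerSeries.X i) • e := by rw [hσX i]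
        _ = j ((MvPowerSeries.X i : MvPowerSeries (Fin 2) k) •
            (Ideal.Quotient.mk I 1)) := (j.map_smulₛₗ _ _).symm
        _ = j 0 := by rw [hXsmul]
        _ = 0 := map_zero j
    have hJe : J ≤ LinearMap.ker (LinearMap.toSpanSingleton (MvPowerSeries (Fin 2) k) E e) := by
      rw [hJdef, Ideal.span_le]
      intro x hx
      simp only [Set.mem_insert_iff, Set.mem_singleton_iff] at hx
      rw [SetLike.mem_coe, LinearMap.mem_ker, LinearMap.toSpanSingleton_apply]
      rcases hx with rfl | rfl
      · exact key 0
      · exact key 1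
    refine ⟨Submodule.liftQ J (LinearMap.toSpanSingleton (MvPowerSeries (Fin 2) k) E e) hJe,
      ?_, ?_⟩
    · intro c
      obtain ⟨s, rfl⟩ := Ideal.Quotient.mk_surjective c
      rw [hι_mk]
      have h2 : Submodule.liftQ J (LinearMap.toSpanSingleton (MvPowerSeries (Fin 2) k) E e) hJe
          (Ideal.Quotient.mk J (σ s)) = σ s • e := by
        show Submodule.liftQ J _ hJe (Submodule.Quotient.mk (σ s)) = σ s • e
        rw [Submodule.liftQ_apply, LinearMap.toSpanSingleton_apply]
      rw [h2]
      have h3 : Ideal.Quotient.mk I s = s • Ideal.Quotient.mk I 1 := by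
        show _ = Ideal.Quotient.mk I (s * 1)
        rw [mul_one]
      rw [h3, j.map_smulₛₗ, he]
    · intro g' hg'
      apply LinearMap.ext
      intro x
      obtain ⟨t, rfl⟩ := Ideal.Quotient.mk_surjective x
      have h4 : Ideal.Quotient.mk J t = t • Ideal.Quotient.mk J 1 := by
        show _ = Ideal.Quotient.mk J (t * 1)
        rw [mul_one]
      have h5 : (Ideal.Quotient.mk J 1) = ι' (Ideal.Quotient.mk I 1) := by
        rw [hι_mk, show σ 1 = 1 from map_one σ]
      have h6 : g' (Ideal.Quotient.mk J 1) = e := by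
        rw [h5, hg', he]
      have h7 : Submodule.liftQ J (LinearMap.toSpanSingleton (MvPowerSeries (Fin 2) k) E e) hJe
          (Ideal.Quotient.mk J 1) = e := by
        show Submodule.liftQ J _ hJe (Submodule.Quotient.mk 1) = e
        rw [Submodule.liftQ_apply, LinearMap.toSpanSingleton_apply, one_smul]
      rw [h4, map_smul, map_smul, h6, h7]
  · -- cokernel annihilated by hbar
    intro x
    obtain ⟨s, rfl⟩ := Ideal.Quotient.mk_surjective x
    obtain ⟨a, z, hz, rfl⟩ := Submodule.mem_span_insert.mp hmem
    obtain ⟨b, w, hw, rfl⟩ := Submodule.mem_span_insert.mp hz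
    obtain ⟨c, rfl⟩ := Submodule.mem_span_singleton.mp hw
    refine ⟨Ideal.Quotient.mk I (c * s), ?_⟩
    rw [hφ_mk]
    have hsm : (a • (MvPowerSeries.X 0 : MvPowerSeries (Fin 2) k) ^ p +
        (b • MvPowerSeries.X 1 ^ p + c • h0)) • Ideal.Quotient.mk J s
        = Ideal.Quotient.mk J ((a • (MvPowerSeries.X 0 : MvPowerSeries (Fin 2) k) ^ p +
          (b • MvPowerSeries.X 1 ^ p + c • h0)) * s) := rfl
    rw [hsm, Ideal.Quotient.mk_eq_mk_iff_sub_mem]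
    have hre : (a • (MvPowerSeries.X 0 : MvPowerSeries (Fin 2) k) ^ p +
        (b • MvPowerSeries.X 1 ^ p + c • h0)) * s - c * s * h0
        = (a * s) * MvPowerSeries.X 0 ^ p + (b * s) * MvPowerSeries.X 1 ^ p := by
      simp only [smul_eq_mul]
      ring
    rw [hre]
    exact add_mem (Ideal.mul_mem_left _ _ hX0J) (Ideal.mul_mem_left _ _ hX1J)
  · -- φ(1) = h0
    rw [hφ_mk, one_mul]
end

section
/- Let S̄ = k[[T₁,…,T_d]] over a field k of characteristic p and let σ be the Frobenius endomorphism with σ(Tᵢ)=Tᵢᵖ (acting by p-th powers on k when k is perfect). Then σ: S̄ → S̄ is faithfully flat, and for every ideal a ⊆ S̄, the extended ideal σ(a)S̄ equals a^{(p)}, the ideal generated by the p-th powers of elements of a. Moreover for ideals a, b one has a^{(p)} ∩ b^{(p)} = (a ∩ b)^{(p)}. -/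
open MvPowerSeries

namespace S4

variable (p : ℕ) {k : Type} [Field k] [CharP k p] [ExpChar k p] [PerfectRing k p] {d : ℕ}

/-! ### Arithmetic of exponents -/

noncomputable def q (m : Fin d →₀ ℕ) : Fin d →₀ ℕ := m.mapRange (· / p) (Nat.zero_div p)
noncomputable def r (m : Fin d →₀ ℕ) : Fin d →₀ ℕ := m.mapRange (· % p) (Nat.zero_mod p)

lemma decomp (m : Fin d →₀ ℕ) : p • q p m + r p m = m := by
  ext i
  simp only [Finsupp.add_apply, Finsupp.smul_apply, q, r, Finsupp.mapRange_apply,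
    smul_eq_mul]
  exact Nat.div_add_mod (m i) p

lemma r_lt (hp : 0 < p) (m : Fin d →₀ ℕ) (i : Fin d) : r p m i < p := by
  simpa [r, Finsupp.mapRange_apply] using Nat.mod_lt _ hp

lemma r_spec (hp : 0 < p) (n e : Fin d →₀ ℕ) (he : ∀ i, e i < p) :
    r p (p • n + e) = e := by
  ext i
  simp only [r, Finsupp.mapRange_apply, Finsupp.add_apply, Finsupp.smul_apply, smul_eq_mul]
  rw [Nat.mul_add_mod, Nat.mod_eq_of_lt (he i)]

lemma q_spec (hp : 0 < p) (n e : Fin d →₀ ℕ) (he : ∀ i, e i < p) :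
    q p (p • n + e) = n := by
  ext i
  simp only [q, Finsupp.mapRange_apply, Finsupp.add_apply, Finsupp.smul_apply, smul_eq_mul]
  rw [Nat.mul_add_div hp, Nat.div_eq_of_lt (he i), add_zero]

lemma uniq (hp : 0 < p) {n n' e e' : Fin d →₀ ℕ} (he : ∀ i, e i < p) (he' : ∀ i, e' i < p)
    (h : p • n + e = p • n' + e') : n = n' ∧ e = e' := by
  constructor
  · rw [← q_spec p hp n e he, h, q_spec p hp n' e' he']
  · rw [← r_spec p hp n e he, h, r_spec p hp n' e' he']

lemma r_le (m : Fin d →₀ ℕ) : r p m ≤ m := by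
  rw [Finsupp.le_def]
  intro i
  simpa [r, Finsupp.mapRange_apply] using Nat.mod_le (m i) p

lemma sub_r (m : Fin d →₀ ℕ) : m - r p m = p • q p m := by
  ext i
  simp only [Finsupp.tsub_apply, r, q, Finsupp.mapRange_apply, Finsupp.smul_apply, smul_eq_mul]
  exact Nat.sub_eq_of_eq_add ((Nat.div_add_mod (m i) p).symm.trans (by ring))

/-! ### the index type of Frobenius digits -/

end S4

/-- Exponents whose entries are `< p`. -/
abbrev S4.Ety (pp dd : ℕ) : Type := {e : Fin dd →₀ ℕ // ∀ i, e i < pp}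

/-- `Ety` is equivalent to `Fin d → Fin p`. -/
noncomputable def S4.EtyEquiv (pp dd : ℕ) : S4.Ety pp dd ≃ (Fin dd → Fin pp) where
  toFun e i := ⟨e.1 i, e.2 i⟩
  invFun c := ⟨Finsupp.equivFunOnFinite.symm fun i => (c i : ℕ), fun i => by
    simpa using (c i).2⟩
  left_inv e := by apply Subtype.ext; ext i; simp
  right_inv c := by ext i; simp

noncomputable instance (pp dd : ℕ) : Fintype (S4.Ety pp dd) :=
  Fintype.ofEquiv _ (S4.EtyEquiv pp dd).symm

namespace S4
variable (p : ℕ) {k : Type} [Field k] [CharP k p] [ExpChar k p] [PerfectRing k p] {d : ℕ}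

/-! ### characteristic of S -/

omit [CharP k p] [ExpChar k p] [PerfectRing k p] in
lemma charPS [CharP k p] : CharP (MvPowerSeries (Fin d) k) p := by
  apply charP_of_injective_ringHom (f := ((MvPowerSeries.C : k →+* MvPowerSeries (Fin d) k)))
  intro a b h
  have := congrArg ((MvPowerSeries.constantCoeff : MvPowerSeries (Fin d) k →+* k)) h
  simpa using this

/-! ### σ is the Frobenius -/

omit [CharP k p] [ExpChar k p] [PerfectRing k p] in
lemma mono_pow (n : Fin d →₀ ℕ) (c : k) (t : ℕ) :
    (monomial n c) ^ t = monomial (t • n) (c ^ t) := by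
  induction t with
  | zero => simp
  | succ t ih => rw [pow_succ, ih, monomial_mul_monomial, succ_nsmul, pow_succ]

omit [CharP k p] [ExpChar k p] [PerfectRing k p] in
lemma coeff_mul_eq_zero (m : Fin d →₀ ℕ) (g h : MvPowerSeries (Fin d) k)
    (hg : ∀ u ≤ m, coeff u g = 0) :
    coeff m (g * h) = 0 := by
  classical
  rw [coeff_mul]
  apply Finset.sum_eq_zero
  rintro ⟨u, v⟩ huv
  have h1 : u + v = m := Finset.HasAntidiagonal.mem_antidiagonal.mp huv
  rw [hg u (h1 ▸ le_self_add), zero_mul]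

section Sigma

variable (σ : MvPowerSeries (Fin d) k →+* MvPowerSeries (Fin d) k)
  (hσ1 : ∀ (f : MvPowerSeries (Fin d) k) (n : (Fin d) →₀ ℕ),
      MvPowerSeries.coeff (p • n) (σ f) = (MvPowerSeries.coeff n f) ^ p)
  (hσ2 : ∀ (f : MvPowerSeries (Fin d) k) (m : (Fin d) →₀ ℕ),
      (∀ n : (Fin d) →₀ ℕ, m ≠ p • n) → MvPowerSeries.coeff m (σ f) = 0)

include hσ1 hσ2 in
omit [CharP k p] [ExpChar k p] [PerfectRing k p] in
lemma sigma_monomial (hp : p.Prime) (u : Fin d →₀ ℕ) (c : k) :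
    σ (monomial u c) = monomial (p • u) (c ^ p) := by
  classical
  ext m
  by_cases hm : ∃ n, m = p • n
  · obtain ⟨n, rfl⟩ := hm
    rw [hσ1, coeff_monomial, coeff_monomial]
    by_cases hnu : n = u
    · subst hnu; simp
    · rw [if_neg hnu, if_neg, zero_pow hp.ne_zero]
      intro hc
      exact hnu (by
        ext i
        have := congrFun (congrArg (fun z : Fin d →₀ ℕ => (z : Fin d → ℕ)) hc) i
        simp only [Finsupp.coe_smul, Pi.smul_apply, smul_eq_mul] at this
        exact Nat.eq_of_mul_eq_mul_left hp.pos this)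
  · rw [hσ2 _ _ (fun n hn => hm ⟨n, hn⟩), coeff_monomial, if_neg]
    intro hc
    exact hm ⟨u, hc⟩

include hσ1 hσ2 in
omit [ExpChar k p] [PerfectRing k p] in
lemma sigma_eq (hp : p.Prime) (f : MvPowerSeries (Fin d) k) : σ f = f ^ p := by
  classical
  haveI : CharP (MvPowerSeries (Fin d) k) p := charPS p
  haveI : ExpChar (MvPowerSeries (Fin d) k) p := ExpChar.prime hp
  ext m
  set P : MvPowerSeries (Fin d) k := ∑ u ∈ Finset.Iic m, monomial u (coeff u f) with hP
  have hPco : ∀ v ≤ m, coeff v P = coeff v f := by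
    intro v hv
    rw [hP, map_sum]
    rw [Finset.sum_eq_single v]
    · rw [coeff_monomial_same]
    · intro u _ hu
      rw [coeff_monomial, if_neg (fun hc => hu hc.symm)]
    · intro hv'
      exact absurd (Finset.mem_Iic.mpr hv) hv'
  have hgco : ∀ v ≤ m, coeff v (f - P) = 0 := by
    intro v hv
    rw [map_sub, hPco v hv, sub_self]
  have hsplit : f = P + (f - P) := by ring
  have htail1 : coeff m (σ (f - P)) = 0 := by
    by_cases hm : ∃ n, m = p • n
    · obtain ⟨n, rfl⟩ := hm
      have hn : n ≤ p • n := by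
        rw [Finsupp.le_def]; intro i
        simpa using Nat.le_mul_of_pos_left (n i) hp.pos
      rw [hσ1, hgco n hn, zero_pow hp.ne_zero]
    · exact hσ2 _ _ (fun n hn => hm ⟨n, hn⟩)
  have htail2 : coeff m ((f - P) ^ p) = 0 := by
    have hpow : (f - P) ^ p = (f - P) * (f - P) ^ (p - 1) := by
      conv_lhs => rw [← Nat.sub_add_cancel hp.one_lt.le]
      rw [pow_succ']
    rw [hpow]
    exact coeff_mul_eq_zero m _ _ hgco
  have hPhead : σ P = P ^ p := by
    rw [hP, map_sum, sum_pow_char (p := p)]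
    apply Finset.sum_congr rfl
    intro u _
    rw [sigma_monomial p σ hσ1 hσ2 hp, mono_pow]
  have hfrob : (P + (f - P)) ^ p = P ^ p + (f - P) ^ p := by
    have := map_add (frobenius (MvPowerSeries (Fin d) k) p) P (f - P)
    simpa [frobenius_def] using this
  calc coeff m (σ f) = coeff m (σ P) + coeff m (σ (f - P)) := by
        conv_lhs => rw [hsplit]
        rw [map_add, map_add]
    _ = coeff m (P ^ p) + 0 := by rw [htail1, hPhead]
    _ = coeff m (P ^ p) + coeff m ((f - P) ^ p) := by rw [htail2]
    _ = coeff m (f ^ p) := by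
        rw [← map_add]
        congr 1
        conv_rhs => rw [hsplit]
        rw [hfrob]


omit [CharP k p] in
noncomputable def part (e : Fin d →₀ ℕ) (g : MvPowerSeries (Fin d) k) :
    MvPowerSeries (Fin d) k :=
  fun n => (frobeniusEquiv k p).symm (coeff (p • n + e) g)

omit [CharP k p] in
lemma coeff_part (e : Fin d →₀ ℕ) (g : MvPowerSeries (Fin d) k) (n : Fin d →₀ ℕ) :
    coeff n (part p e g) = (frobeniusEquiv k p).symm (coeff (p • n + e) g) := rfl

omit [CharP k p] in
lemma part_add (e : Fin d →₀ ℕ) (g h : MvPowerSeries (Fin d) k) :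
    part p e (g + h) = part p e g + part p e h := by
  ext n
  have h1 : coeff n (part p e g + part p e h)
      = coeff n (part p e g) + coeff n (part p e h) := map_add _ _ _
  rw [h1, coeff_part, coeff_part, coeff_part, map_add, map_add]

/-- `part p e` as an additive monoid hom. -/
noncomputable def partHom (e : Fin d →₀ ℕ) :
    MvPowerSeries (Fin d) k →+ MvPowerSeries (Fin d) k :=
  AddMonoidHom.mk' (part p e) (part_add p e)

include hσ1 hσ2

omit [CharP k p] in
lemma recon (hp : p.Prime) (g : MvPowerSeries (Fin d) k) :
    ∑ e : Ety p d, σ (part p e.1 g) * monomial e.1 1 = g := by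
  classical
  ext m
  rw [map_sum]
  rw [Finset.sum_eq_single_of_mem (⟨r p m, r_lt p hp.pos m⟩ : Ety p d) (Finset.mem_univ _)]
  · rw [coeff_mul_monomial, if_pos (r_le p m), mul_one, sub_r, hσ1]
    show (((frobeniusEquiv k p).symm (coeff (p • q p m + r p m) g)) : k) ^ p = coeff m g
    rw [decomp]
    exact (frobeniusEquiv k p).apply_symm_apply _
  · intro e _ hne
    rw [coeff_mul_monomial]
    split_ifs with hle
    · rw [hσ2, zero_mul]
      intro n hn
      apply hne
      have hm : m = p • n + e.1 := by
        rw [← hn]; exact (tsub_add_cancel_of_le hle).symm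
      apply Subtype.ext
      show e.1 = r p m
      rw [hm, r_spec p hp.pos n e.1 e.2]
    · rfl

omit [CharP k p] in
lemma part_recon (hp : p.Prime) (c : Ety p d → MvPowerSeries (Fin d) k) (e : Ety p d) :
    part p e.1 (∑ e' : Ety p d, σ (c e') * monomial e'.1 1) = c e := by
  classical
  ext n
  rw [coeff_part, map_sum]
  rw [Finset.sum_eq_single_of_mem e (Finset.mem_univ _)]
  · rw [coeff_mul_monomial, if_pos le_add_self, mul_one, add_tsub_cancel_right, hσ1]
    exact (frobeniusEquiv k p).symm_apply_apply _
  · intro e' _ hne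
    rw [coeff_mul_monomial]
    split_ifs with hle
    · rw [hσ2, zero_mul]
      intro w hw
      apply hne
      have hm : p • n + e.1 = p • w + e'.1 := by
        rw [← hw]; exact (tsub_add_cancel_of_le hle).symm
      exact Subtype.ext (uniq p hp.pos e.2 e'.2 hm).2.symm
    · rfl

omit [CharP k p] in
lemma part_sigma_mul (hp : p.Prime) (e : Ety p d) (s t : MvPowerSeries (Fin d) k) :
    part p e.1 (σ s * t) = s * part p e.1 t := by
  conv_lhs => rw [← recon p σ hσ1 hσ2 hp t]
  rw [Finset.mul_sum]
  have h1 : ∀ e' : Ety p d, σ s * (σ (part p e'.1 t) * monomial e'.1 1)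
      = σ (s * part p e'.1 t) * monomial e'.1 1 := fun e' => by
    rw [← mul_assoc, ← map_mul]
  rw [Finset.sum_congr rfl (fun e' _ => h1 e')]
  exact part_recon p σ hσ1 hσ2 hp (fun e' => s * part p e'.1 t) e

omit [CharP k p] in
lemma mem_map_iff (hp : p.Prime) (a : Ideal (MvPowerSeries (Fin d) k))
    (g : MvPowerSeries (Fin d) k) :
    g ∈ Ideal.map σ a ↔ ∀ e : Ety p d, part p e.1 g ∈ a := by
  classical
  constructor
  · intro hg e
    have hg' : g ∈ Submodule.span (MvPowerSeries (Fin d) k)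
        (σ '' (a : Set (MvPowerSeries (Fin d) k))) := hg
    obtain ⟨n, cf, x, hx⟩ := Submodule.mem_span_set'.mp hg'
    rw [← hx]
    have hsum : part p e.1 (∑ i, cf i • (x i : MvPowerSeries (Fin d) k))
        = ∑ i, part p e.1 (cf i • (x i : MvPowerSeries (Fin d) k)) :=
      map_sum (partHom p e.1) _ _
    rw [hsum]
    apply Ideal.sum_mem
    intro i _
    obtain ⟨fi, hfi, hfe⟩ := (x i).2
    have h2 : cf i • (x i : MvPowerSeries (Fin d) k) = σ fi * cf i := by
      rw [smul_eq_mul, ← hfe, mul_comm]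
    rw [h2, part_sigma_mul p σ hσ1 hσ2 hp e fi (cf i)]
    exact Ideal.mul_mem_right _ _ hfi
  · intro h
    have hmem := Ideal.sum_mem (Ideal.map σ a) (fun e (_ : e ∈ Finset.univ) =>
      Ideal.mul_mem_right (monomial e.1 1) _ (Ideal.mem_map_of_mem σ (h e)))
    rwa [recon p σ hσ1 hσ2 hp g] at hmem

end Sigma
end S4


/-- `S`, viewed as a module over itself via the ring endomorphism `σ`
(so `s • t = σ s * t`).  Flatness / faithful flatness of this module is
flatness / faithful flatness of the ring homomorphism `σ`. -/
def FrobTwist (S : Type) [CommRing S] (σ : S →+* S) : Type := S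

instance {S : Type} [CommRing S] (σ : S →+* S) : AddCommGroup (FrobTwist S σ) :=
  inferInstanceAs (AddCommGroup S)

instance {S : Type} [CommRing S] (σ : S →+* S) : Module S (FrobTwist S σ) :=
  Module.compHom S σ

/-- Let `S̄ = k[[T₁,…,T_d]]` over a perfect field `k` of
characteristic `p` and `σ` the Frobenius endomorphism with `σ(Tᵢ) = Tᵢᵖ`.
Then `σ : S̄ → S̄` is faithfully flat, for every ideal `a ⊆ S̄` the extended
ideal `σ(a)S̄` equals `a^{(p)}` (the ideal generated by the `p`-th powers of
elements of `a`), and for ideals `a,b` one has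
`a^{(p)} ∩ b^{(p)} = (a ∩ b)^{(p)}`. -/
theorem statement4 (p : ℕ) (hp : p.Prime) (k : Type) [Field k] [CharP k p] [ExpChar k p]
    [PerfectRing k p] (d : ℕ)
    (σ : MvPowerSeries (Fin d) k →+* MvPowerSeries (Fin d) k)
    (hσ1 : ∀ (f : MvPowerSeries (Fin d) k) (n : (Fin d) →₀ ℕ),
      MvPowerSeries.coeff (p • n) (σ f) = (MvPowerSeries.coeff n f) ^ p)
    (hσ2 : ∀ (f : MvPowerSeries (Fin d) k) (m : (Fin d) →₀ ℕ),
      (∀ n : (Fin d) →₀ ℕ, m ≠ p • n) → MvPowerSeries.coeff m (σ f) = 0) :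
    Module.FaithfullyFlat (MvPowerSeries (Fin d) k) (FrobTwist (MvPowerSeries (Fin d) k) σ) ∧
    (∀ a : Ideal (MvPowerSeries (Fin d) k),
      Ideal.map σ a = Ideal.span ((fun f => f ^ p) '' (a : Set (MvPowerSeries (Fin d) k)))) ∧
    (∀ a b : Ideal (MvPowerSeries (Fin d) k),
      Ideal.span ((fun f => f ^ p) '' (a : Set (MvPowerSeries (Fin d) k))) ⊓
        Ideal.span ((fun f => f ^ p) '' (b : Set (MvPowerSeries (Fin d) k))) =
      Ideal.span ((fun f => f ^ p) '' ((a ⊓ b : Ideal (MvPowerSeries (Fin d) k)) :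
        Set (MvPowerSeries (Fin d) k)))) := by
  classical
  have hsig : ∀ f, σ f = f ^ p := S4.sigma_eq p σ hσ1 hσ2 hp
  have hmap : ∀ a : Ideal (MvPowerSeries (Fin d) k),
      Ideal.map σ a = Ideal.span ((fun f => f ^ p) '' (a : Set (MvPowerSeries (Fin d) k))) := by
    intro a
    show Ideal.span (σ '' (a : Set (MvPowerSeries (Fin d) k))) = _
    congr 1
    ext g
    simp only [Set.mem_image]
    constructor
    · rintro ⟨f, hf, rfl⟩; exact ⟨f, hf, (hsig f).symm⟩
    · rintro ⟨f, hf, rfl⟩; exact ⟨f, hf, hsig f⟩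
  refine ⟨?_, hmap, ?_⟩
  · letI eqv : FrobTwist (MvPowerSeries (Fin d) k) σ ≃ₗ[MvPowerSeries (Fin d) k]
        (S4.Ety p d → MvPowerSeries (Fin d) k) :=
      { toFun := fun g e => S4.part p e.1 g
        map_add' := fun g h => funext fun e => S4.part_add p e.1 g h
        map_smul' := fun s g => funext fun e => S4.part_sigma_mul p σ hσ1 hσ2 hp e s g
        invFun := fun c => ∑ e : S4.Ety p d, σ (c e) * MvPowerSeries.monomial e.1 1
        left_inv := fun g => S4.recon p σ hσ1 hσ2 hp g
        right_inv := fun c => funext fun e => S4.part_recon p σ hσ1 hσ2 hp c e }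
    haveI : Module.Free (MvPowerSeries (Fin d) k) (FrobTwist (MvPowerSeries (Fin d) k) σ) :=
      Module.Free.of_equiv eqv.symm
    haveI : Nontrivial (FrobTwist (MvPowerSeries (Fin d) k) σ) :=
      inferInstanceAs (Nontrivial (MvPowerSeries (Fin d) k))
    infer_instance
  · intro a b
    rw [← hmap a, ← hmap b, ← hmap (a ⊓ b)]
    ext g
    rw [Submodule.mem_inf, S4.mem_map_iff p σ hσ1 hσ2 hp a g,
      S4.mem_map_iff p σ hσ1 hσ2 hp b g, S4.mem_map_iff p σ hσ1 hσ2 hp (a ⊓ b) g]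
    simp only [Submodule.mem_inf]
    exact forall_and.symm
end

section
/- Let S be a regular local ring and M a finitely generated S-module of projective dimension at most 1 annihilated by a power of p (p a nonzerodivisor of S). Then M* := Ext¹_S(M, S) is again a finitely generated S-module of projective dimension at most 1 annihilated by the same power of p, and the natural map M → (M*)* is an isomorphism (the duality M ↦ Ext¹_S(M,S) is an involutive exact anti-equivalence on such modules). -/
/-- A Noetherian local ring is regular if its maximal ideal can be generated
by `dim S` elements. -/
def IsRegularLocal (S : Type) [CommRing S] [IsLocalRing S] [IsNoetherianRing S] : Prop :=
  ∃ (n : ℕ) (s : Fin n → S), Ideal.span (Set.range s) = IsLocalRing.maximalIdeal S ∧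
    ringKrullDim S = n

/-- Let `S` be a regular local ring and `M` a finitely
generated `S`-module of projective dimension at most `1` (given by a finite
free resolution `0 → F₁ →f F₀ →g M → 0`) annihilated by a power `pⁿ` of a
nonzerodivisor prime `p`.  Then `M* := Ext¹_S(M,S)`, computed as the cokernel
of the dual map `f^∨ : F₀^∨ → F₁^∨`, is again finitely generated of projective
dimension at most `1` and annihilated by `pⁿ` (in particular `f^∨` is
injective), and the natural double dual `(M*)*`, computed as the cokernel of
`f^∨∨`, is isomorphic to `M`. -/
theorem statement8 (p : ℕ) (hp : p.Prime) (nn : ℕ)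
    (S : Type) [CommRing S] [IsLocalRing S] [IsNoetherianRing S]
    (hregular : IsRegularLocal S)
    (hpnzd : (p : S) ∈ nonZeroDivisors S)
    (M : Type) [AddCommGroup M] [Module S M] [Module.Finite S M]
    (hann : ∀ m : M, ((p : S) ^ nn) • m = 0)
    (n₀ n₁ : ℕ)
    (f : (Fin n₁ → S) →ₗ[S] (Fin n₀ → S)) (g : (Fin n₀ → S) →ₗ[S] M)
    (hf : Function.Injective f) (hg : Function.Surjective g)
    (hfg : LinearMap.ker g = LinearMap.range f) :
    Function.Injective f.dualMap ∧
    Module.Finite S (Module.Dual S (Fin n₁ → S) ⧸ LinearMap.range f.dualMap) ∧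
    (∀ x : Module.Dual S (Fin n₁ → S) ⧸ LinearMap.range f.dualMap,
      ((p : S) ^ nn) • x = 0) ∧
    -- `M*` has projective dimension at most `1`
    (∃ (m₀ m₁ : ℕ) (u : (Fin m₁ → S) →ₗ[S] (Fin m₀ → S))
        (v : (Fin m₀ → S) →ₗ[S] (Module.Dual S (Fin n₁ → S) ⧸ LinearMap.range f.dualMap)),
      Function.Injective u ∧ Function.Surjective v ∧ LinearMap.ker v = LinearMap.range u) ∧
    -- the natural map `M → (M*)*` is an isomorphism
    Nonempty (M ≃ₗ[S]
      (Module.Dual S (Module.Dual S (Fin n₀ → S)) ⧸ LinearMap.range f.dualMap.dualMap)) := by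
  have hpnzd' : ((p : S) ^ nn) ∈ nonZeroDivisors S := pow_mem hpnzd nn
  -- the multiplication-by-pⁿ map factors through f: h : F₀ → F₁ with f ∘ h = pⁿ • id
  set q : (Fin n₀ → S) →ₗ[S] (Fin n₀ → S) := ((p : S) ^ nn) • LinearMap.id with hq_def
  have hq : ∀ x, q x ∈ LinearMap.range f := by
    intro x
    rw [← hfg, LinearMap.mem_ker]
    have : g (q x) = ((p : S) ^ nn) • g x := by simp [hq_def]
    rw [this, hann]
  set e : (Fin n₁ → S) ≃ₗ[S] LinearMap.range f := LinearEquiv.ofInjective f hf with he_def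
  set h : (Fin n₀ → S) →ₗ[S] (Fin n₁ → S) :=
    e.symm.toLinearMap ∘ₗ (q.codRestrict (LinearMap.range f) hq) with hh_def
  have hfh : ∀ x, f (h x) = ((p : S) ^ nn) • x := by
    intro x
    have h1 : (e (h x) : Fin n₀ → S) = f (h x) := LinearEquiv.ofInjective_apply f (h x)
    have h2 : e (h x) = q.codRestrict (LinearMap.range f) hq x := by
      simp [hh_def]
    have h3 : ((q.codRestrict (LinearMap.range f) hq x : Fin n₀ → S)) = q x := rfl
    rw [← h1, h2, h3, hq_def]
    rfl
  have hhf : ∀ z, h (f z) = ((p : S) ^ nn) • z := by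
    intro z
    apply hf
    rw [hfh, map_smul]
  -- injectivity of the dual map
  have hinj : Function.Injective f.dualMap := by
    rw [← LinearMap.ker_eq_bot]
    apply LinearMap.ker_eq_bot'.mpr
    intro φ hφ
    have key : ∀ v, φ v = 0 := by
      intro v
      have h1 : φ (f (h v)) = 0 := DFunLike.congr_fun hφ (h v)
      rw [hfh, map_smul, smul_eq_mul] at h1
      exact hpnzd'.2 (φ v) (by rwa [mul_comm] at h1)
    exact LinearMap.ext fun v => key v
  -- annihilation of the cokernel by pⁿ
  have hannstar : ∀ x : Module.Dual S (Fin n₁ → S) ⧸ LinearMap.range f.dualMap,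
      ((p : S) ^ nn) • x = 0 := by
    intro x
    obtain ⟨ψ, rfl⟩ := Submodule.mkQ_surjective _ x
    rw [← map_smul, Submodule.mkQ_apply, Submodule.Quotient.mk_eq_zero]
    refine ⟨ψ ∘ₗ h, ?_⟩
    ext z
    simp only [LinearMap.dualMap_apply, LinearMap.coe_comp, Function.comp_apply,
      LinearMap.smul_apply]
    rw [hhf, map_smul]
  refine ⟨hinj, inferInstance, hannstar, ?_, ?_⟩
  · -- projective dimension at most 1 of the cokernel
    set e₀ : (Fin n₀ → S) ≃ₗ[S] Module.Dual S (Fin n₀ → S) :=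
      ((Pi.basisFun S (Fin n₀)).dualBasis.equivFun).symm with he0
    set e₁ : (Fin n₁ → S) ≃ₗ[S] Module.Dual S (Fin n₁ → S) :=
      ((Pi.basisFun S (Fin n₁)).dualBasis.equivFun).symm with he1
    refine ⟨n₁, n₀, e₁.symm.toLinearMap ∘ₗ f.dualMap ∘ₗ e₀.toLinearMap,
      (LinearMap.range f.dualMap).mkQ ∘ₗ e₁.toLinearMap, ?_, ?_, ?_⟩
    · exact e₁.symm.injective.comp (hinj.comp e₀.injective)
    · exact (Submodule.mkQ_surjective _).comp e₁.surjective
    · rw [LinearMap.ker_comp, Submodule.ker_mkQ, LinearMap.range_comp, LinearMap.range_comp,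
        LinearEquiv.range, Submodule.map_top, Submodule.comap_equiv_eq_map_symm]
  · -- double duality
    set DD := Module.Dual S (Module.Dual S (Fin n₀ → S))
    set ε₀ : (Fin n₀ → S) ≃ₗ[S] DD := Module.evalEquiv S (Fin n₀ → S) with hε0
    have hnat : f.dualMap.dualMap ∘ₗ (Module.evalEquiv S (Fin n₁ → S)).toLinearMap
        = ε₀.toLinearMap ∘ₗ f := by
      ext z φ
      simp [hε0, Module.evalEquiv_apply]
      rfl
    have hmap : Submodule.map ε₀.toLinearMap (LinearMap.range f)
        = LinearMap.range f.dualMap.dualMap := by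
      rw [← LinearMap.range_comp, ← hnat, LinearMap.range_comp, LinearEquiv.range,
        Submodule.map_top]
    exact ⟨((g.quotKerEquivOfSurjective hg).symm.trans
      (Submodule.quotEquivOfEq _ _ hfg |>.trans
        (Submodule.Quotient.equiv (LinearMap.range f) (LinearMap.range f.dualMap.dualMap)
          ε₀ hmap)))⟩
end
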